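/- arXiv:2102.03960 — 4 statements merged into one kernel-verified Lean document; each statement's English description precedes it below -/
import Mathlib

section
/- Let G be a connected simple graph on n vertices with m edges, maximum degree Δ and minimum degree δ. Then 2√2·m·δ/n ≤ ρ_1 ≤ Δ·√(4m − 2n + 2), where ρ_1 is the Sombor spectral radius. Equality in the lower bound holds if and only if G is regular, and equality in the upper bound holds if and only if G is the complete graph K_n. -/
open scoped Classical
open Matrix

noncomputable def somborMatrix {V : Type*} [Fintype V] (G : SimpleGraph V) :
    Matrix V V ℝ := fun i j =>
  if G.Adj i j then Real.sqrt ((G.degree i : ℝ) ^ 2 + (G.degree j : ℝ) ^ 2) else 0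

lemma somborMatrix_isHermitian {V : Type*} [Fintype V] (G : SimpleGraph V) :
    (somborMatrix G).IsHermitian := by
  apply Matrix.ext
  intro i j
  simp only [Matrix.conjTranspose_apply, star_trivial, somborMatrix]
  rw [G.adj_comm, add_comm]

/-- The Sombor eigenvalues of `G`. -/
noncomputable def somborEigs {V : Type*} [Fintype V] (G : SimpleGraph V) : V → ℝ :=
  (somborMatrix_isHermitian G).eigenvalues

/-- The Sombor spectral radius (largest Sombor eigenvalue). -/
noncomputable def somborSpecRad {V : Type*} [Fintype V] (G : SimpleGraph V) : ℝ :=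
  ⨆ i, somborEigs G i

/-- The Sombor energy. -/
noncomputable def somborEnergy {V : Type*} [Fintype V] (G : SimpleGraph V) : ℝ :=
  ∑ i, |somborEigs G i|

/-- The Sombor Estrada index. -/
noncomputable def somborEstrada {V : Type*} [Fintype V] (G : SimpleGraph V) : ℝ :=
  ∑ i, Real.exp (somborEigs G i)

/-- The forgotten topological index `F = ∑ d_i ^ 3`. -/
noncomputable def forgottenIndex {V : Type*} [Fintype V] (G : SimpleGraph V) : ℝ :=
  ∑ i, (G.degree i : ℝ) ^ 3

section aux
variable {V : Type*} [Fintype V] [Nonempty V]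

-- Rayleigh-type bound
lemma rayleigh_le (A : Matrix V V ℝ) (hA : A.IsHermitian) (ρ : ℝ)
    (h : ∀ i, hA.eigenvalues i ≤ ρ) (x : V → ℝ) :
    x ⬝ᵥ (A *ᵥ x) ≤ ρ * (x ⬝ᵥ x) := by
  classical
  set U : Matrix V V ℝ := (hA.eigenvectorUnitary : Matrix V V ℝ) with hU
  set y : V → ℝ := (star U) *ᵥ x with hy
  have hdot : ∀ w : V → ℝ, x ⬝ᵥ (U *ᵥ w) = y ⬝ᵥ w := by
    intro w
    rw [Matrix.dotProduct_mulVec, hy, Matrix.star_eq_conjTranspose,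
      Matrix.conjTranspose_eq_transpose_of_trivial, Matrix.mulVec_transpose]
  have h1 : x ⬝ᵥ (A *ᵥ x) = ∑ i, hA.eigenvalues i * (y i)^2 := by
    conv_lhs => rw [hA.spectral_theorem, Unitary.conjStarAlgAut_apply]
    rw [← Matrix.mulVec_mulVec, ← Matrix.mulVec_mulVec, hdot]
    rw [← hU, ← hy]
    simp [dotProduct, Matrix.mulVec_diagonal]
    exact Finset.sum_congr rfl fun i _ => by ring
  have h2 : y ⬝ᵥ y = x ⬝ᵥ x := by
    rw [hy, ← hdot, Matrix.mulVec_mulVec, Matrix.mem_unitaryGroup_iff.mp hA.eigenvectorUnitary.2,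
      Matrix.one_mulVec]
  have h3 : ∑ i, hA.eigenvalues i * (y i)^2 ≤ ρ * (y ⬝ᵥ y) := by
    rw [dotProduct, Finset.mul_sum]
    apply Finset.sum_le_sum
    intro i _
    have := sq_nonneg (y i)
    nlinarith [h i]
  rw [h1, ← h2]
  exact h3


lemma exists_sombor_eigvec (G : SimpleGraph V) :
    ∃ v : V → ℝ, v ≠ 0 ∧ somborMatrix G *ᵥ v = somborSpecRad G • v ∧
      ∀ i, somborEigs G i ≤ somborSpecRad G := by
  classical
  obtain ⟨i0, hi0⟩ := Finite.exists_max (somborEigs G)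
  have hsup : somborSpecRad G = somborEigs G i0 :=
    le_antisymm (ciSup_le hi0) (le_ciSup (Set.Finite.bddAbove (Set.finite_range _)) i0)
  set hA := somborMatrix_isHermitian G
  refine ⟨⇑(hA.eigenvectorBasis i0), ?_, ?_, fun i => hsup ▸ hi0 i⟩
  · intro hzero
    apply hA.eigenvectorBasis.orthonormal.ne_zero i0
    ext j
    exact congrFun hzero j
  · rw [hsup]
    exact hA.mulVec_eigenvectorBasis i0

lemma sqrt_two_mul_sq {a : ℝ} (ha : 0 ≤ a) : Real.sqrt (a^2+a^2) = Real.sqrt 2 * a := by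
  rw [← two_mul, Real.sqrt_mul (by norm_num : (0:ℝ) ≤ 2), Real.sqrt_sq ha]

omit [Nonempty V] in
lemma sombor_nonneg (G : SimpleGraph V) (i j : V) : 0 ≤ somborMatrix G i j := by
  unfold somborMatrix
  split
  · exact Real.sqrt_nonneg _
  · exact le_refl _

omit [Nonempty V] in
lemma sombor_adj (G : SimpleGraph V) {i j : V} (h : G.Adj i j) :
    somborMatrix G i j = Real.sqrt ((G.degree i : ℝ)^2 + (G.degree j : ℝ)^2) := if_pos h

omit [Nonempty V] in
lemma sombor_not_adj (G : SimpleGraph V) {i j : V} (h : ¬ G.Adj i j) :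
    somborMatrix G i j = 0 := if_neg h

omit [Nonempty V] in
lemma sombor_le (G : SimpleGraph V) {i j : V} (h : G.Adj i j) :
    somborMatrix G i j ≤ Real.sqrt 2 * (G.maxDegree : ℝ) := by
  rw [sombor_adj G h, ← sqrt_two_mul_sq (Nat.cast_nonneg _)]
  apply Real.sqrt_le_sqrt
  have h1 : (G.degree i : ℝ) ≤ G.maxDegree := Nat.cast_le.mpr (G.degree_le_maxDegree i)
  have h2 : (G.degree j : ℝ) ≤ G.maxDegree := Nat.cast_le.mpr (G.degree_le_maxDegree j)
  have := Nat.cast_nonneg (α := ℝ) (G.degree i)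
  have := Nat.cast_nonneg (α := ℝ) (G.degree j)
  nlinarith

omit [Nonempty V] in
lemma le_sombor (G : SimpleGraph V) {i j : V} (h : G.Adj i j) :
    Real.sqrt 2 * (G.minDegree : ℝ) ≤ somborMatrix G i j := by
  rw [sombor_adj G h, ← sqrt_two_mul_sq (Nat.cast_nonneg _)]
  apply Real.sqrt_le_sqrt
  have h1 : (G.minDegree : ℝ) ≤ G.degree i := Nat.cast_le.mpr (G.minDegree_le_degree i)
  have h2 : (G.minDegree : ℝ) ≤ G.degree j := Nat.cast_le.mpr (G.minDegree_le_degree j)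
  have := Nat.cast_nonneg (α := ℝ) (G.minDegree)
  nlinarith

omit [Nonempty V] in
lemma ite_sum_deg (G : SimpleGraph V) (i : V) (c : ℝ) :
    ∑ j, (if G.Adj i j then c else 0) = (G.degree i : ℝ) * c := by
  classical
  rw [← Finset.sum_filter, Finset.sum_const, ← SimpleGraph.neighborFinset_eq_filter,
    SimpleGraph.card_neighborFinset_eq_degree, nsmul_eq_mul]

omit [Nonempty V] in
lemma sombor_rowsum_le (G : SimpleGraph V) (i : V) :
    ∑ j, somborMatrix G i j ≤ Real.sqrt 2 * (G.maxDegree : ℝ) * (G.degree i : ℝ) := by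
  calc ∑ j, somborMatrix G i j
      ≤ ∑ j, (if G.Adj i j then Real.sqrt 2 * (G.maxDegree : ℝ) else 0) := by
        apply Finset.sum_le_sum
        intro j _
        by_cases h : G.Adj i j
        · rw [if_pos h]; exact sombor_le G h
        · rw [if_neg h, sombor_not_adj G h]
    _ = (G.degree i : ℝ) * (Real.sqrt 2 * (G.maxDegree : ℝ)) := ite_sum_deg G i _
    _ = _ := by ring

lemma somborSpecRad_regular (G : SimpleGraph V) {k : ℕ} (h : G.IsRegularOfDegree k) :
    somborSpecRad G = Real.sqrt 2 * (k:ℝ)^2 := by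
  classical
  obtain ⟨v, hv0, hveq, heig⟩ := exists_sombor_eigvec G
  have hrow : ∀ i, ∑ j, somborMatrix G i j = Real.sqrt 2 * (k:ℝ)^2 := by
    intro i
    have : ∀ j, somborMatrix G i j = (if G.Adj i j then Real.sqrt 2 * (k:ℝ) else 0) := by
      intro j
      by_cases hadj : G.Adj i j
      · rw [if_pos hadj, sombor_adj G hadj, h i, h j, sqrt_two_mul_sq (Nat.cast_nonneg _)]
      · rw [if_neg hadj, sombor_not_adj G hadj]
    rw [Finset.sum_congr rfl fun j _ => this j, ite_sum_deg, h i]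
    ring
  -- upper bound
  have hupper : somborSpecRad G ≤ Real.sqrt 2 * (k:ℝ)^2 := by
    obtain ⟨i0, hi0⟩ := Finite.exists_max (fun i => |v i|)
    have hM : 0 < |v i0| := by
      obtain ⟨j, hj⟩ := Function.ne_iff.mp hv0
      exact lt_of_lt_of_le (abs_pos.mpr hj) (hi0 j)
    have hev : (somborMatrix G *ᵥ v) i0 = somborSpecRad G * v i0 := by
      rw [hveq]; rfl
    have habs : |somborSpecRad G| * |v i0| ≤ (Real.sqrt 2 * (k:ℝ)^2) * |v i0| := by
      rw [← abs_mul, ← hev]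
      calc |(somborMatrix G *ᵥ v) i0| ≤ ∑ j, somborMatrix G i0 j * |v j| := by
            rw [Matrix.mulVec, dotProduct]
            exact (Finset.abs_sum_le_sum_abs _ _).trans (Finset.sum_le_sum fun j _ => by
              rw [abs_mul, abs_of_nonneg (sombor_nonneg G i0 j)])
        _ ≤ ∑ j, somborMatrix G i0 j * |v i0| :=
            Finset.sum_le_sum fun j _ =>
              mul_le_mul_of_nonneg_left (hi0 j) (sombor_nonneg G i0 j)
        _ = (∑ j, somborMatrix G i0 j) * |v i0| := by rw [Finset.sum_mul]
        _ = (Real.sqrt 2 * (k:ℝ)^2) * |v i0| := by rw [hrow i0]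
    have := (mul_le_mul_iff_of_pos_right hM).mp habs
    exact (le_abs_self _).trans this
  -- lower bound
  have hlower : Real.sqrt 2 * (k:ℝ)^2 ≤ somborSpecRad G := by
    have hr := rayleigh_le (somborMatrix G) (somborMatrix_isHermitian G) (somborSpecRad G)
      heig (fun _ => 1)
    have hxx : ((fun _ => (1:ℝ)) : V → ℝ) ⬝ᵥ ((fun _ => (1:ℝ)) : V → ℝ) = (Fintype.card V : ℝ) := by
      simp [dotProduct]
    have hSx : (fun _ => (1:ℝ)) ⬝ᵥ (somborMatrix G *ᵥ (fun _ => (1:ℝ)))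
        = (Fintype.card V : ℝ) * (Real.sqrt 2 * (k:ℝ)^2) := by
      simp only [dotProduct, Matrix.mulVec, one_mul, mul_one]
      rw [Finset.sum_congr rfl fun i _ => hrow i, Finset.sum_const, nsmul_eq_mul,
        Finset.card_univ]
    rw [hSx, hxx] at hr
    have hn : 0 < (Fintype.card V : ℝ) := by
      exact_mod_cast Fintype.card_pos
    nlinarith
  linarith

lemma minDegree_regular (G : SimpleGraph V) {k : ℕ} (h : G.IsRegularOfDegree k) :
    G.minDegree = k := by
  classical
  obtain ⟨i⟩ := ‹Nonempty V›
  exact le_antisymm (h i ▸ G.minDegree_le_degree i)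
    (G.le_minDegree_of_forall_le_degree k fun j => (h j).ge)

lemma maxDegree_regular (G : SimpleGraph V) {k : ℕ} (h : G.IsRegularOfDegree k) :
    G.maxDegree = k := by
  classical
  obtain ⟨i⟩ := ‹Nonempty V›
  exact le_antisymm (G.maxDegree_le_of_forall_degree_le k fun j => (h j).le)
    (h i ▸ G.degree_le_maxDegree i)

omit [Nonempty V] in
lemma connected_ind (G : SimpleGraph V) (hconn : G.Connected) (P : V → Prop) {i0 : V}
    (h0 : P i0) (hstep : ∀ x y, G.Adj x y → P x → P y) (u : V) : P u := by
  have key : ∀ {a b : V} (_ : G.Walk a b), P a → P b := by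
    intro a b w
    induction w with
    | nil => exact id
    | cons h p ih => exact fun ha => ih (hstep _ _ h ha)
  obtain ⟨w⟩ := hconn.preconnected i0 u
  exact key w h0

omit [Nonempty V] in
lemma degpos_of_connected (G : SimpleGraph V) (hconn : G.Connected)
    (hn2 : 1 < Fintype.card V) (i : V) : 0 < G.degree i := by
  classical
  obtain ⟨j, hj⟩ := Fintype.exists_ne_of_one_lt_card hn2 i
  obtain ⟨w⟩ := hconn.preconnected i j
  rw [G.degree_pos_iff_exists_adj]
  cases w with
  | nil => exact absurd rfl hj
  | cons h p => exact ⟨_, h⟩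

omit [Nonempty V] in
lemma eq_top_of_regular (G : SimpleGraph V) (h : G.IsRegularOfDegree (Fintype.card V - 1)) :
    G = ⊤ := by
  classical
  ext u w
  simp only [SimpleGraph.top_adj]
  constructor
  · exact fun ha => ha.ne
  · intro hne
    have hsub : G.neighborFinset u ⊆ Finset.univ.erase u := by
      intro x hx
      rw [Finset.mem_erase]
      exact ⟨(G.mem_neighborFinset u x |>.mp hx).ne', Finset.mem_univ x⟩
    have hcard : (Finset.univ.erase u).card ≤ (G.neighborFinset u).card := by
      rw [Finset.card_erase_of_mem (Finset.mem_univ u), Finset.card_univ,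
        SimpleGraph.card_neighborFinset_eq_degree, h u]
    have := Finset.eq_of_subset_of_card_le hsub hcard
    rw [← G.mem_neighborFinset, this, Finset.mem_erase]
    exact ⟨hne.symm, Finset.mem_univ w⟩

omit [Nonempty V] in
lemma deg_eq_max_of_entry (G : SimpleGraph V) {i j : V} (h : G.Adj i j)
    (heq : somborMatrix G i j = Real.sqrt 2 * (G.maxDegree : ℝ)) :
    (G.degree i : ℝ) = (G.maxDegree : ℝ) ∧ (G.degree j : ℝ) = (G.maxDegree : ℝ) := by
  rw [sombor_adj G h, ← sqrt_two_mul_sq (Nat.cast_nonneg _)] at heq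
  have hsq : (G.degree i : ℝ)^2 + (G.degree j : ℝ)^2
      = (G.maxDegree : ℝ)^2 + (G.maxDegree : ℝ)^2 := by
    have h1 : (0:ℝ) ≤ (G.degree i : ℝ)^2 + (G.degree j : ℝ)^2 := by positivity
    have h2 : (0:ℝ) ≤ (G.maxDegree : ℝ)^2 + (G.maxDegree : ℝ)^2 := by positivity
    have := congrArg (fun t => t^2) heq
    simpa [Real.sq_sqrt h1, Real.sq_sqrt h2] using this
  have h1 : (G.degree i : ℝ) ≤ (G.maxDegree : ℝ) := Nat.cast_le.mpr (G.degree_le_maxDegree i)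
  have h2 : (G.degree j : ℝ) ≤ (G.maxDegree : ℝ) := Nat.cast_le.mpr (G.degree_le_maxDegree j)
  have h3 : (0:ℝ) ≤ (G.degree i : ℝ) := Nat.cast_nonneg _
  have h4 : (0:ℝ) ≤ (G.degree j : ℝ) := Nat.cast_nonneg _
  constructor <;> nlinarith

omit [Nonempty V] in
lemma deg_eq_min_of_entry (G : SimpleGraph V) {i j : V} (h : G.Adj i j)
    (heq : somborMatrix G i j = Real.sqrt 2 * (G.minDegree : ℝ)) :
    (G.degree i : ℝ) = (G.minDegree : ℝ) := by
  rw [sombor_adj G h, ← sqrt_two_mul_sq (Nat.cast_nonneg _)] at heq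
  have hsq : (G.degree i : ℝ)^2 + (G.degree j : ℝ)^2
      = (G.minDegree : ℝ)^2 + (G.minDegree : ℝ)^2 := by
    have h1 : (0:ℝ) ≤ (G.degree i : ℝ)^2 + (G.degree j : ℝ)^2 := by positivity
    have h2 : (0:ℝ) ≤ (G.minDegree : ℝ)^2 + (G.minDegree : ℝ)^2 := by positivity
    have := congrArg (fun t => t^2) heq
    simpa [Real.sq_sqrt h1, Real.sq_sqrt h2] using this
  have h1 : (G.minDegree : ℝ) ≤ (G.degree i : ℝ) := Nat.cast_le.mpr (G.minDegree_le_degree i)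
  have h2 : (G.minDegree : ℝ) ≤ (G.degree j : ℝ) := Nat.cast_le.mpr (G.minDegree_le_degree j)
  have h3 : (0:ℝ) ≤ (G.minDegree : ℝ) := Nat.cast_nonneg _
  nlinarith

-- average row sum lower bound for spectral radius
lemma sum_sum_le_specRad (G : SimpleGraph V) :
    ∑ i, ∑ j, somborMatrix G i j ≤ somborSpecRad G * (Fintype.card V : ℝ) := by
  classical
  obtain ⟨v, hv0, hveq, heig⟩ := exists_sombor_eigvec G
  have hr := rayleigh_le (somborMatrix G) (somborMatrix_isHermitian G) (somborSpecRad G)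
    heig (fun _ => 1)
  have hxx : ((fun _ => (1:ℝ)) : V → ℝ) ⬝ᵥ ((fun _ => (1:ℝ)) : V → ℝ)
      = (Fintype.card V : ℝ) := by simp [dotProduct]
  have hSx : ((fun _ => (1:ℝ)) : V → ℝ) ⬝ᵥ (somborMatrix G *ᵥ ((fun _ => (1:ℝ)) : V → ℝ))
      = ∑ i, ∑ j, somborMatrix G i j := by
    simp [dotProduct, Matrix.mulVec]
  rw [hSx, hxx] at hr
  exact hr

omit [Nonempty V] in
lemma sombor_pos (G : SimpleGraph V) {i j : V} (h : G.Adj i j) (hd : 0 < G.degree i) :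
    0 < somborMatrix G i j := by
  rw [sombor_adj G h]
  apply Real.sqrt_pos.mpr
  have : (0:ℝ) < (G.degree i : ℝ) := by exact_mod_cast hd
  nlinarith [sq_nonneg ((G.degree j : ℝ))]

omit [Nonempty V] in
lemma sombor_rowsum_pos (G : SimpleGraph V) {k : V} (hd : ∀ i, 0 < G.degree i) :
    0 < ∑ j, somborMatrix G k j := by
  classical
  obtain ⟨j0, hj0⟩ := (G.degree_pos_iff_exists_adj k).mp (hd k)
  calc (0:ℝ) < somborMatrix G k j0 := sombor_pos G hj0 (hd k)
    _ ≤ ∑ j, somborMatrix G k j :=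
        Finset.single_le_sum (fun j _ => sombor_nonneg G k j) (Finset.mem_univ j0)

omit [Nonempty V] in
lemma nbr_deg_sum (G : SimpleGraph V) (hdeg : ∀ i, 0 < G.degree i) (i : V) :
    (∑ k, (if G.Adj i k then (G.degree k : ℝ) else 0)
      ≤ 2 * (G.edgeFinset.card : ℝ) - (Fintype.card V : ℝ) + 1) ∧
    (∑ k, (if G.Adj i k then (G.degree k : ℝ) else 0)
        = 2 * (G.edgeFinset.card : ℝ) - (Fintype.card V : ℝ) + 1 →
      ∀ j, ¬ G.Adj i j → j ≠ i → G.degree j = 1) := by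
  classical
  set N := G.neighborFinset i with hN
  set Nc := (Finset.univ : Finset V) \ N with hNc
  have hiNc : i ∈ Nc := by
    rw [hNc, Finset.mem_sdiff]
    exact ⟨Finset.mem_univ i, fun hmem => G.irrefl ((G.mem_neighborFinset i i).mp hmem)⟩
  have hsplit : ∑ k, (if G.Adj i k then (G.degree k : ℝ) else 0)
      = ∑ k ∈ N, (G.degree k : ℝ) := by
    rw [← Finset.sum_filter, hN, SimpleGraph.neighborFinset_eq_filter]
  have htot : ∑ k ∈ Nc, (G.degree k : ℝ) + ∑ k ∈ N, (G.degree k : ℝ)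
      = 2 * (G.edgeFinset.card : ℝ) := by
    rw [hNc, Finset.sum_sdiff (Finset.subset_univ N)]
    exact_mod_cast congrArg (Nat.cast : ℕ → ℝ) G.sum_degrees_eq_twice_card_edges
  have hdi_lt : G.degree i < Fintype.card V := G.degree_lt_card_verts i
  have hcardNc : (Nc.card : ℝ) = (Fintype.card V : ℝ) - (G.degree i : ℝ) := by
    rw [hNc, Finset.card_sdiff_of_subset (Finset.subset_univ N), Finset.card_univ, hN,
      SimpleGraph.card_neighborFinset_eq_degree]
    rw [Nat.cast_sub hdi_lt.le]
  have hlow : ∀ k ∈ Nc, (if k = i then (G.degree i : ℝ) else 1) ≤ (G.degree k : ℝ) := by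
    intro k _
    by_cases hk : k = i
    · rw [if_pos hk, hk]
    · rw [if_neg hk]
      exact_mod_cast hdeg k
  have hNcsum : ∑ k ∈ Nc, (if k = i then (G.degree i : ℝ) else 1)
      = (Fintype.card V : ℝ) - 1 := by
    rw [← Finset.add_sum_erase _ _ hiNc, if_pos rfl]
    rw [Finset.sum_congr rfl (fun k hk => if_neg (Finset.mem_erase.mp hk).1),
      Finset.sum_const, Finset.card_erase_of_mem hiNc, nsmul_eq_mul, mul_one]
    have h1 : 1 ≤ Nc.card := Finset.card_pos.mpr ⟨i, hiNc⟩
    rw [Nat.cast_sub h1]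
    rw [hcardNc]
    push_cast
    ring
  have hNclow : (Fintype.card V : ℝ) - 1 ≤ ∑ k ∈ Nc, (G.degree k : ℝ) := by
    rw [← hNcsum]
    exact Finset.sum_le_sum hlow
  constructor
  · rw [hsplit]
    linarith
  · intro hEq j hnadj hji
    have hjNc : j ∈ Nc := by
      rw [hNc, Finset.mem_sdiff, hN]
      exact ⟨Finset.mem_univ j, fun hmem => hnadj ((G.mem_neighborFinset i j).mp hmem)⟩
    rw [hsplit] at hEq
    have hNceq : ∑ k ∈ Nc, (if k = i then (G.degree i : ℝ) else 1)
        = ∑ k ∈ Nc, (G.degree k : ℝ) := by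
      rw [hNcsum]; linarith
    have hptw := (Finset.sum_eq_sum_iff_of_le hlow).mp hNceq j hjNc
    rw [if_neg hji] at hptw
    exact_mod_cast hptw.symm
omit [Nonempty V] in
lemma W_bound (G : SimpleGraph V) (hdeg : ∀ i, 0 < G.degree i) (i : V) :
    (∑ k, somborMatrix G i k * (∑ j, somborMatrix G k j)
      ≤ 2 * (G.maxDegree:ℝ)^2 * (2*(G.edgeFinset.card:ℝ) - (Fintype.card V:ℝ) + 1)) ∧
    (∑ k, somborMatrix G i k * (∑ j, somborMatrix G k j)
        = 2 * (G.maxDegree:ℝ)^2 * (2*(G.edgeFinset.card:ℝ) - (Fintype.card V:ℝ) + 1) →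
      (∀ k, G.Adj i k → somborMatrix G i k = Real.sqrt 2 * (G.maxDegree:ℝ) ∧
        (∑ j, somborMatrix G k j) = Real.sqrt 2 * (G.maxDegree:ℝ) * (G.degree k : ℝ)) ∧
      (∀ j, ¬ G.Adj i j → j ≠ i → G.degree j = 1)) := by
  classical
  set Δ : ℝ := (G.maxDegree : ℝ) with hΔdef
  have hΔpos : 0 < Δ := by
    have h1 := hdeg i
    have h2 := G.degree_le_maxDegree i
    have h3 : 0 < G.maxDegree := lt_of_lt_of_le h1 h2
    rw [hΔdef]
    exact_mod_cast h3
  have hsq2 : Real.sqrt 2 * Real.sqrt 2 = 2 := Real.mul_self_sqrt (by norm_num)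
  have h1ptw : ∀ k, somborMatrix G i k * (∑ j, somborMatrix G k j)
      ≤ (if G.Adj i k then Real.sqrt 2 * Δ * (∑ j, somborMatrix G k j) else 0) := by
    intro k
    by_cases h : G.Adj i k
    · rw [if_pos h]
      exact mul_le_mul_of_nonneg_right (sombor_le G h)
        (Finset.sum_nonneg fun j _ => sombor_nonneg G k j)
    · rw [if_neg h, sombor_not_adj G h, zero_mul]
  have h2ptw : ∀ k, (if G.Adj i k then Real.sqrt 2 * Δ * (∑ j, somborMatrix G k j) else 0)
      ≤ (if G.Adj i k then 2 * Δ^2 * (G.degree k : ℝ) else 0) := by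
    intro k
    by_cases h : G.Adj i k
    · rw [if_pos h, if_pos h]
      have := mul_le_mul_of_nonneg_left (sombor_rowsum_le G k)
        (by positivity : (0:ℝ) ≤ Real.sqrt 2 * Δ)
      calc Real.sqrt 2 * Δ * (∑ j, somborMatrix G k j)
          ≤ Real.sqrt 2 * Δ * (Real.sqrt 2 * Δ * (G.degree k : ℝ)) := this
        _ = 2 * Δ^2 * (G.degree k : ℝ) := by
            rw [hΔdef]
            linear_combination ((G.maxDegree:ℝ)^2 * (G.degree k : ℝ)) * hsq2
    · rw [if_neg h, if_neg h]
  have h3eq : ∑ k, (if G.Adj i k then 2 * Δ^2 * (G.degree k : ℝ) else 0)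
      = 2 * Δ^2 * ∑ k, (if G.Adj i k then (G.degree k : ℝ) else 0) := by
    rw [Finset.mul_sum]
    exact Finset.sum_congr rfl fun k _ => by split <;> ring
  obtain ⟨hnbr, hnbr_eq⟩ := nbr_deg_sum G hdeg i
  have hchain1 : ∑ k, somborMatrix G i k * (∑ j, somborMatrix G k j)
      ≤ ∑ k, (if G.Adj i k then Real.sqrt 2 * Δ * (∑ j, somborMatrix G k j) else 0) :=
    Finset.sum_le_sum (fun k _ => h1ptw k)
  have hchain2 : ∑ k, (if G.Adj i k then Real.sqrt 2 * Δ * (∑ j, somborMatrix G k j) else 0)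
      ≤ ∑ k, (if G.Adj i k then 2 * Δ^2 * (G.degree k : ℝ) else 0) :=
    Finset.sum_le_sum (fun k _ => h2ptw k)
  have hchain3 : 2 * Δ^2 * ∑ k, (if G.Adj i k then (G.degree k : ℝ) else 0)
      ≤ 2 * Δ^2 * (2*(G.edgeFinset.card:ℝ) - (Fintype.card V:ℝ) + 1) :=
    mul_le_mul_of_nonneg_left hnbr (by positivity)
  constructor
  · calc ∑ k, somborMatrix G i k * (∑ j, somborMatrix G k j)
        ≤ ∑ k, (if G.Adj i k then Real.sqrt 2 * Δ * (∑ j, somborMatrix G k j) else 0) := hchain1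
      _ ≤ ∑ k, (if G.Adj i k then 2 * Δ^2 * (G.degree k : ℝ) else 0) := hchain2
      _ = _ := h3eq
      _ ≤ _ := hchain3
  · intro hEq
    rw [h3eq] at hchain2
    -- all inequalities are equalities
    have e1 : ∑ k, somborMatrix G i k * (∑ j, somborMatrix G k j)
        = ∑ k, (if G.Adj i k then Real.sqrt 2 * Δ * (∑ j, somborMatrix G k j) else 0) := by
      linarith
    have e2 : ∑ k, (if G.Adj i k then Real.sqrt 2 * Δ * (∑ j, somborMatrix G k j) else 0)
        = 2 * Δ^2 * ∑ k, (if G.Adj i k then (G.degree k : ℝ) else 0) := by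
      linarith
    have e3 : 2 * Δ^2 * ∑ k, (if G.Adj i k then (G.degree k : ℝ) else 0)
        = 2 * Δ^2 * (2*(G.edgeFinset.card:ℝ) - (Fintype.card V:ℝ) + 1) := by
      linarith
    have e3' : ∑ k, (if G.Adj i k then (G.degree k : ℝ) else 0)
        = 2*(G.edgeFinset.card:ℝ) - (Fintype.card V:ℝ) + 1 :=
      mul_left_cancel₀ (by positivity) e3
    have e1ptw := (Finset.sum_eq_sum_iff_of_le (fun k _ => h1ptw k)).mp e1
    have e2' : ∑ k, (if G.Adj i k then Real.sqrt 2 * Δ * (∑ j, somborMatrix G k j) else 0)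
        = ∑ k, (if G.Adj i k then 2 * Δ^2 * (G.degree k : ℝ) else 0) := by
      rw [e2, h3eq]
    have e2ptw := (Finset.sum_eq_sum_iff_of_le (fun k _ => h2ptw k)).mp e2'
    refine ⟨fun k hk => ?_, hnbr_eq e3'⟩
    have hRpos : 0 < ∑ j, somborMatrix G k j := sombor_rowsum_pos G hdeg
    have heq1 := e1ptw k (Finset.mem_univ k)
    rw [if_pos hk] at heq1
    have hSik : somborMatrix G i k = Real.sqrt 2 * Δ :=
      mul_right_cancel₀ (ne_of_gt hRpos) heq1
    have heq2 := e2ptw k (Finset.mem_univ k)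
    rw [if_pos hk, if_pos hk] at heq2
    have hRk : ∑ j, somborMatrix G k j = Real.sqrt 2 * Δ * (G.degree k : ℝ) := by
      have hne : Real.sqrt 2 * Δ ≠ 0 := by positivity
      apply mul_left_cancel₀ hne
      rw [heq2]
      linear_combination (-(Δ^2 * (G.degree k : ℝ))) * hsq2
    exact ⟨hSik, hRk⟩
lemma lower_main (G : SimpleGraph V) (hconn : G.Connected) (hn2 : 1 < Fintype.card V) :
    2 * Real.sqrt 2 * (G.edgeFinset.card : ℝ) * (G.minDegree : ℝ) / (Fintype.card V : ℝ)
      ≤ somborSpecRad G ∧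
    (2 * Real.sqrt 2 * (G.edgeFinset.card : ℝ) * (G.minDegree : ℝ) / (Fintype.card V : ℝ)
        = somborSpecRad G → ∃ k, G.IsRegularOfDegree k) := by
  classical
  have hdeg : ∀ i, 0 < G.degree i := degpos_of_connected G hconn hn2
  have hnpos : (0:ℝ) < (Fintype.card V : ℝ) := by exact_mod_cast Fintype.card_pos
  have hptw : ∀ i, ∀ k ∈ (Finset.univ : Finset V),
      (if G.Adj i k then Real.sqrt 2 * (G.minDegree : ℝ) else 0) ≤ somborMatrix G i k := by
    intro i k _
    by_cases h : G.Adj i k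
    · rw [if_pos h]; exact le_sombor G h
    · rw [if_neg h, sombor_not_adj G h]
  have hrow : ∀ i ∈ (Finset.univ : Finset V),
      (G.degree i : ℝ) * (Real.sqrt 2 * (G.minDegree : ℝ)) ≤ ∑ j, somborMatrix G i j := by
    intro i _
    rw [← ite_sum_deg G i]
    exact Finset.sum_le_sum (hptw i)
  have hdegsum : ∑ i, (G.degree i : ℝ) = 2 * (G.edgeFinset.card : ℝ) := by
    exact_mod_cast congrArg (Nat.cast : ℕ → ℝ) G.sum_degrees_eq_twice_card_edges
  have htot : Real.sqrt 2 * (G.minDegree : ℝ) * (2 * (G.edgeFinset.card : ℝ))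
      ≤ ∑ i, ∑ j, somborMatrix G i j := by
    calc Real.sqrt 2 * (G.minDegree : ℝ) * (2 * (G.edgeFinset.card : ℝ))
        = ∑ i, (G.degree i : ℝ) * (Real.sqrt 2 * (G.minDegree : ℝ)) := by
          rw [← Finset.sum_mul, hdegsum]; ring
      _ ≤ _ := Finset.sum_le_sum hrow
  have hray := sum_sum_le_specRad G
  constructor
  · rw [div_le_iff₀ hnpos]
    calc 2 * Real.sqrt 2 * (G.edgeFinset.card : ℝ) * (G.minDegree : ℝ)
        = Real.sqrt 2 * (G.minDegree : ℝ) * (2 * (G.edgeFinset.card : ℝ)) := by ring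
      _ ≤ ∑ i, ∑ j, somborMatrix G i j := htot
      _ ≤ _ := hray
  · intro hEq
    have hEq' : somborSpecRad G * (Fintype.card V : ℝ)
        = Real.sqrt 2 * (G.minDegree : ℝ) * (2 * (G.edgeFinset.card : ℝ)) := by
      rw [← hEq]
      field_simp
    have hsums : ∑ i, ∑ j, somborMatrix G i j
        = ∑ i, (G.degree i : ℝ) * (Real.sqrt 2 * (G.minDegree : ℝ)) := by
      have h1 : ∑ i, (G.degree i : ℝ) * (Real.sqrt 2 * (G.minDegree : ℝ))
          = Real.sqrt 2 * (G.minDegree : ℝ) * (2 * (G.edgeFinset.card : ℝ)) := by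
        rw [← Finset.sum_mul, hdegsum]; ring
      have h2 := Finset.sum_le_sum hrow
      rw [h1]
      linarith
    have hrows := (Finset.sum_eq_sum_iff_of_le hrow).mp hsums.symm
    have hentry : ∀ i j, G.Adj i j →
        somborMatrix G i j = Real.sqrt 2 * (G.minDegree : ℝ) := by
      intro i j hij
      have hrowi := hrows i (Finset.mem_univ i)
      have hrowi' : ∑ k, (if G.Adj i k then Real.sqrt 2 * (G.minDegree : ℝ) else 0)
          = ∑ k, somborMatrix G i k := by
        rw [ite_sum_deg G i, hrowi]
      have := (Finset.sum_eq_sum_iff_of_le (hptw i)).mp hrowi' j (Finset.mem_univ j)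
      rw [if_pos hij] at this
      exact this.symm
    refine ⟨G.minDegree, fun u => ?_⟩
    obtain ⟨j, hj⟩ := (G.degree_pos_iff_exists_adj u).mp (hdeg u)
    have := deg_eq_min_of_entry G hj (hentry u j hj)
    exact_mod_cast this

lemma lower_eq_of_regular (G : SimpleGraph V) {k : ℕ} (h : G.IsRegularOfDegree k) :
    2 * Real.sqrt 2 * (G.edgeFinset.card : ℝ) * (G.minDegree : ℝ) / (Fintype.card V : ℝ)
      = somborSpecRad G := by
  classical
  have hnpos : (0:ℝ) < (Fintype.card V : ℝ) := by exact_mod_cast Fintype.card_pos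
  have h2m : 2 * (G.edgeFinset.card : ℝ) = (Fintype.card V : ℝ) * k := by
    have := G.sum_degrees_eq_twice_card_edges
    have h1 : ∑ v, G.degree v = Fintype.card V * k := by
      rw [Finset.sum_congr rfl fun v _ => h v, Finset.sum_const, Finset.card_univ, smul_eq_mul]
    rw [h1] at this
    exact_mod_cast this.symm
  rw [somborSpecRad_regular G h, minDegree_regular G h]
  rw [div_eq_iff (ne_of_gt hnpos)]
  linear_combination (Real.sqrt 2 * (k:ℝ)) * h2m

lemma upper_main (G : SimpleGraph V) (hconn : G.Connected) (hn2 : 1 < Fintype.card V) :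
    somborSpecRad G ≤ (G.maxDegree : ℝ) *
        Real.sqrt (4 * (G.edgeFinset.card : ℝ) - 2 * (Fintype.card V : ℝ) + 2) ∧
    (somborSpecRad G = (G.maxDegree : ℝ) *
        Real.sqrt (4 * (G.edgeFinset.card : ℝ) - 2 * (Fintype.card V : ℝ) + 2) → G = ⊤) := by
  classical
  have hdeg : ∀ i, 0 < G.degree i := degpos_of_connected G hconn hn2
  set S := somborMatrix G with hSdef
  set ρ := somborSpecRad G with hρdef
  set Δ : ℝ := (G.maxDegree : ℝ) with hΔdef
  set m : ℝ := (G.edgeFinset.card : ℝ) with hmdef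
  set nR : ℝ := (Fintype.card V : ℝ) with hnRdef
  set X : ℝ := 4 * m - 2 * nR + 2 with hXdef
  set C : ℝ := 2 * Δ^2 * (2 * m - nR + 1) with hCdef
  have hΔpos : 0 < Δ := by
    have h3 : 0 < G.maxDegree := lt_of_lt_of_le (hdeg (Classical.arbitrary V))
      (G.degree_le_maxDegree _)
    rw [hΔdef]; exact_mod_cast h3
  have hX0 : 0 ≤ X := by
    have hdegsum : ∑ i, (G.degree i : ℝ) = 2 * m := by
      rw [hmdef]
      exact_mod_cast congrArg (Nat.cast : ℕ → ℝ) G.sum_degrees_eq_twice_card_edges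
    have h1 : nR ≤ 2 * m := by
      rw [← hdegsum, hnRdef]
      calc (Fintype.card V : ℝ) = ∑ _i : V, (1:ℝ) := by
            rw [Finset.sum_const, Finset.card_univ, nsmul_eq_mul, mul_one]
        _ ≤ ∑ i, (G.degree i : ℝ) := Finset.sum_le_sum fun i _ => by exact_mod_cast hdeg i
    rw [hXdef]; linarith
  have hCX : C = (Δ * Real.sqrt X)^2 := by
    rw [mul_pow, Real.sq_sqrt hX0, hCdef, hXdef]; ring
  obtain ⟨v, hv0, hveq, _⟩ := exists_sombor_eigvec G
  obtain ⟨i0, hi0⟩ := Finite.exists_max (fun i => |v i|)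
  have hM : 0 < |v i0| := by
    obtain ⟨j, hj⟩ := Function.ne_iff.mp hv0
    exact lt_of_lt_of_le (abs_pos.mpr hj) (hi0 j)
  have hv2 : S *ᵥ (S *ᵥ v) = (ρ^2) • v := by
    rw [hveq, Matrix.mulVec_smul, hveq, smul_smul, ← sq]
  have happ : ∀ i, ∑ j, (∑ k, S i k * S k j) * v j = ρ^2 * v i := by
    intro i
    have h1 : (S *ᵥ (S *ᵥ v)) i = ρ^2 * v i := by rw [hv2]; rfl
    rw [← h1]
    calc ∑ j, (∑ k, S i k * S k j) * v j
        = ∑ j, ∑ k, S i k * S k j * v j := by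
          exact Finset.sum_congr rfl fun j _ => Finset.sum_mul _ _ _
      _ = ∑ k, ∑ j, S i k * S k j * v j := Finset.sum_comm
      _ = ∑ k, S i k * ∑ j, S k j * v j := by
          refine Finset.sum_congr rfl fun k _ => ?_
          rw [Finset.mul_sum]
          exact Finset.sum_congr rfl fun j _ => by ring
      _ = (S *ᵥ (S *ᵥ v)) i := rfl
  have hBnn : ∀ i j, 0 ≤ ∑ k, S i k * S k j := fun i j =>
    Finset.sum_nonneg fun k _ => mul_nonneg (sombor_nonneg G i k) (sombor_nonneg G k j)
  have hBsum : ∀ i, ∑ j, ∑ k, S i k * S k j = ∑ k, S i k * (∑ j, S k j) := by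
    intro i
    rw [Finset.sum_comm]
    exact Finset.sum_congr rfl fun k _ => (Finset.mul_sum _ _ _).symm
  have hW := fun i => W_bound G hdeg i
  -- key chain at any vertex of maximal |v|
  have chain : ∀ u, |v u| = |v i0| →
      (ρ^2 * |v i0| = ∑ j, (∑ k, S u k * S k j) * |v j| ∧
       ∑ j, (∑ k, S u k * S k j) * |v j| = ∑ j, (∑ k, S u k * S k j) * |v i0| ∧
       (∑ k, S u k * (∑ j, S k j)) * |v i0| ≤ C * |v i0|) →
      True := fun _ _ _ => trivial
  have key : ∀ u, |v u| = |v i0| → ρ^2 * |v i0| ≤ C * |v i0| := by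
    intro u hu
    calc ρ^2 * |v i0| = |ρ^2 * v u| := by
          rw [abs_mul, abs_of_nonneg (sq_nonneg ρ), hu]
      _ = |∑ j, (∑ k, S u k * S k j) * v j| := by rw [happ u]
      _ ≤ ∑ j, (∑ k, S u k * S k j) * |v j| := by
          refine (Finset.abs_sum_le_sum_abs _ _).trans ?_
          refine Finset.sum_le_sum fun j _ => ?_
          rw [abs_mul, abs_of_nonneg (hBnn u j)]
      _ ≤ ∑ j, (∑ k, S u k * S k j) * |v i0| :=
          Finset.sum_le_sum fun j _ => mul_le_mul_of_nonneg_left (hi0 j) (hBnn u j)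
      _ = (∑ k, S u k * (∑ j, S k j)) * |v i0| := by rw [← Finset.sum_mul, hBsum]
      _ ≤ C * |v i0| := mul_le_mul_of_nonneg_right (hW u).1 (abs_nonneg _)
  have hρ2 : ρ^2 ≤ C := le_of_mul_le_mul_right (key i0 rfl) hM
  constructor
  · by_cases hρ : ρ ≤ 0
    · exact hρ.trans (by positivity)
    · push_neg at hρ
      calc ρ = Real.sqrt (ρ^2) := (Real.sqrt_sq hρ.le).symm
        _ ≤ Real.sqrt ((Δ * Real.sqrt X)^2) := Real.sqrt_le_sqrt (hCX ▸ hρ2)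
        _ = Δ * Real.sqrt X := Real.sqrt_sq (by positivity)
  · intro hEq
    have hρC : ρ^2 = C := by rw [hEq, hCX]
    -- maximality set analysis
    have step1 : ∀ u, |v u| = |v i0| →
        (∑ k, S u k * (∑ j, S k j)) = C ∧
        (∀ j, (∑ k, S u k * S k j) ≠ 0 → |v j| = |v i0|) := by
      intro u hu
      have e1 : ρ^2 * |v i0| ≤ ∑ j, (∑ k, S u k * S k j) * |v j| := by
        calc ρ^2 * |v i0| = |ρ^2 * v u| := by
              rw [abs_mul, abs_of_nonneg (sq_nonneg ρ), hu]
          _ = |∑ j, (∑ k, S u k * S k j) * v j| := by rw [happ u]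
          _ ≤ ∑ j, (∑ k, S u k * S k j) * |v j| := by
              refine (Finset.abs_sum_le_sum_abs _ _).trans ?_
              refine Finset.sum_le_sum fun j _ => ?_
              rw [abs_mul, abs_of_nonneg (hBnn u j)]
      have e2ptw : ∀ j ∈ (Finset.univ : Finset V),
          (∑ k, S u k * S k j) * |v j| ≤ (∑ k, S u k * S k j) * |v i0| :=
        fun j _ => mul_le_mul_of_nonneg_left (hi0 j) (hBnn u j)
      have e2 := Finset.sum_le_sum e2ptw
      have e3 : ∑ j, (∑ k, S u k * S k j) * |v i0|
          = (∑ k, S u k * (∑ j, S k j)) * |v i0| := by rw [← Finset.sum_mul, hBsum]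
      have e4 : (∑ k, S u k * (∑ j, S k j)) * |v i0| ≤ C * |v i0| :=
        mul_le_mul_of_nonneg_right (hW u).1 (abs_nonneg _)
      have hCeq : C * |v i0| = ρ^2 * |v i0| := by rw [hρC]
      have hWu : (∑ k, S u k * (∑ j, S k j)) = C := by
        have h5 : (∑ k, S u k * (∑ j, S k j)) * |v i0| = C * |v i0| := by linarith
        exact mul_right_cancel₀ (ne_of_gt hM) h5
      refine ⟨hWu, fun j hBj => ?_⟩
      have hsums : ∑ j, (∑ k, S u k * S k j) * |v j|
          = ∑ j, (∑ k, S u k * S k j) * |v i0| := by linarith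
      have := (Finset.sum_eq_sum_iff_of_le e2ptw).mp hsums j (Finset.mem_univ j)
      exact (mul_left_cancel₀ hBj this)
    -- all vertices have max degree
    have hprop : ∀ u, |v u| = |v i0| ∨ ∃ i, |v i| = |v i0| ∧ G.Adj i u := by
      refine connected_ind G hconn _ (Or.inl rfl) ?_
      intro x y hxy hPx
      rcases hPx with hx | ⟨i, hiT, hix⟩
      · exact Or.inr ⟨x, hx, hxy⟩
      · left
        refine (step1 i hiT).2 y (ne_of_gt ?_)
        have hterm : 0 < S i x * S x y :=
          mul_pos (sombor_pos G hix (hdeg i)) (sombor_pos G hxy (hdeg x))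
        refine Finset.sum_pos' (fun k _ =>
          mul_nonneg (sombor_nonneg G i k) (sombor_nonneg G k y)) ⟨x, Finset.mem_univ x, hterm⟩
    have hregΔ : ∀ u, G.degree u = G.maxDegree := by
      intro u
      rcases hprop u with hu | ⟨i, hiT, hadj⟩
      · obtain ⟨k0, hk0⟩ := (G.degree_pos_iff_exists_adj u).mp (hdeg u)
        have hstruct := (hW u).2 (step1 u hu).1
        have hentry := (hstruct.1 k0 hk0).1
        have := (deg_eq_max_of_entry G hk0 hentry).1
        exact_mod_cast this
      · have hstruct := (hW i).2 (step1 i hiT).1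
        have hentry := (hstruct.1 u hadj).1
        have := (deg_eq_max_of_entry G hadj hentry).2
        exact_mod_cast this
    -- max degree is n - 1
    have hΔn : G.maxDegree = Fintype.card V - 1 := by
      by_cases hΔ2 : 2 ≤ G.maxDegree
      · have hadji0 : ∀ j, j ≠ i0 → G.Adj i0 j := by
          intro j hj
          by_contra hnadj
          have hstruct := (hW i0).2 (step1 i0 rfl).1
          have := hstruct.2 j hnadj hj
          rw [hregΔ j] at this
          omega
        have hN : G.neighborFinset i0 = Finset.univ.erase i0 := by
          ext x
          rw [G.mem_neighborFinset, Finset.mem_erase]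
          constructor
          · exact fun h => ⟨h.ne', Finset.mem_univ x⟩
          · exact fun h => hadji0 x h.1
        have hd : G.degree i0 = Fintype.card V - 1 := by
          rw [← SimpleGraph.card_neighborFinset_eq_degree, hN,
            Finset.card_erase_of_mem (Finset.mem_univ i0), Finset.card_univ]
        rw [← hregΔ i0, hd]
      · have hΔge1 : 1 ≤ G.maxDegree := lt_of_lt_of_le (hdeg i0) (G.degree_le_maxDegree i0)
        have hΔ1 : G.maxDegree = 1 := by omega
        obtain ⟨k0, hk0⟩ := (G.degree_pos_iff_exists_adj i0).mp (hdeg i0)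
        have huniq : ∀ x y z, G.Adj x y → G.Adj x z → z = y := by
          intro x y z hxy hxz
          have h1 : (G.neighborFinset x).card = 1 := by
            rw [SimpleGraph.card_neighborFinset_eq_degree, hregΔ x, hΔ1]
          obtain ⟨a, ha⟩ := Finset.card_eq_one.mp h1
          have hy : y ∈ G.neighborFinset x := (G.mem_neighborFinset x y).mpr hxy
          have hz : z ∈ G.neighborFinset x := (G.mem_neighborFinset x z).mpr hxz
          rw [ha, Finset.mem_singleton] at hy hz
          rw [hy, hz]
        have hall : ∀ u, u = i0 ∨ u = k0 := by
          refine connected_ind G hconn _ (Or.inl rfl) ?_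
          intro x y hxy hPx
          rcases hPx with hx | hx
          · right; subst hx; exact huniq x k0 y hk0 hxy
          · left; subst hx; exact huniq x i0 y hk0.symm hxy
        have hsub : (Finset.univ : Finset V) ⊆ {i0, k0} := by
          intro u _
          rcases hall u with h | h <;> simp [h]
        have hcard2 : Fintype.card V ≤ 2 := by
          calc Fintype.card V = (Finset.univ : Finset V).card := Finset.card_univ.symm
            _ ≤ ({i0, k0} : Finset V).card := Finset.card_le_card hsub
            _ ≤ 2 := Finset.card_insert_le i0 {k0} |>.trans (by simp)
        omega
    have hreg : G.IsRegularOfDegree (Fintype.card V - 1) := fun u => by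
      rw [hregΔ u, hΔn]
    exact eq_top_of_regular G hreg
lemma top_eq (G : SimpleGraph V) (h : G = ⊤) : somborSpecRad G
    = ((G.maxDegree : ℝ)) *
      Real.sqrt (4 * ((G.edgeFinset.card : ℝ))
        - 2 * (Fintype.card V : ℝ) + 2) := by
  classical
  have hA : ∀ u w : V, G.Adj u w ↔ u ≠ w := by
    intro u w
    rw [h]
    simp
  set c : ℕ := Fintype.card V - 1 with hcdef
  have hn1 : 1 ≤ Fintype.card V := Fintype.card_pos
  have hreg : G.IsRegularOfDegree c := by
    intro v
    have hN : G.neighborFinset v = Finset.univ.erase v := by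
      ext w
      rw [G.mem_neighborFinset, Finset.mem_erase, hA]
      constructor
      · exact fun hw => ⟨hw.symm, Finset.mem_univ w⟩
      · exact fun hw => hw.1.symm
    rw [← SimpleGraph.card_neighborFinset_eq_degree, hN,
      Finset.card_erase_of_mem (Finset.mem_univ v), Finset.card_univ]
  have hρ := somborSpecRad_regular _ hreg
  have hΔ := maxDegree_regular _ hreg
  have hc : (c : ℝ) = (Fintype.card V : ℝ) - 1 := by
    rw [hcdef, Nat.cast_sub hn1, Nat.cast_one]
  have h2m : 2 * ((G.edgeFinset.card : ℝ)) = (Fintype.card V : ℝ) * c := by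
    have h0 := G.sum_degrees_eq_twice_card_edges
    have h1 : ∑ v, G.degree v = Fintype.card V * c := by
      rw [Finset.sum_congr rfl fun v _ => hreg v, Finset.sum_const, Finset.card_univ,
        smul_eq_mul]
    rw [h1] at h0
    exact_mod_cast h0.symm
  have hXc : 4 * ((G.edgeFinset.card : ℝ)) - 2 * (Fintype.card V : ℝ) + 2
      = (c:ℝ)^2 + (c:ℝ)^2 := by
    linear_combination 2 * h2m + (2 - 2*(c:ℝ)) * hc
  rw [hρ, hΔ, hXc, sqrt_two_mul_sq (Nat.cast_nonneg c)]
  ring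
end aux

theorem stmt5 {n : ℕ} [NeZero n] (G : SimpleGraph (Fin n)) (hconn : G.Connected) :
    (2 * Real.sqrt 2 * (G.edgeFinset.card : ℝ) * (G.minDegree : ℝ) / n ≤ somborSpecRad G ∧
      somborSpecRad G ≤
        (G.maxDegree : ℝ) * Real.sqrt (4 * (G.edgeFinset.card : ℝ) - 2 * n + 2)) ∧
    (2 * Real.sqrt 2 * (G.edgeFinset.card : ℝ) * (G.minDegree : ℝ) / n = somborSpecRad G ↔
      ∃ k, G.IsRegularOfDegree k) ∧
    (somborSpecRad G =
        (G.maxDegree : ℝ) * Real.sqrt (4 * (G.edgeFinset.card : ℝ) - 2 * n + 2) ↔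
      G = ⊤) := by
  classical
  haveI : Nonempty (Fin n) := ⟨⟨0, Nat.pos_of_ne_zero (NeZero.ne n)⟩⟩
  by_cases hn1 : n = 1
  · subst hn1
    have hreg0 : G.IsRegularOfDegree 0 := by
      intro v
      rw [← SimpleGraph.card_neighborFinset_eq_degree, Finset.card_eq_zero]
      ext w
      simp only [G.mem_neighborFinset, Finset.notMem_empty, iff_false]
      intro h
      exact h.ne (Subsingleton.elim v w)
    have hρ : somborSpecRad G = 0 := by
      rw [somborSpecRad_regular G hreg0]; norm_num
    have hδ : G.minDegree = 0 := minDegree_regular G hreg0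
    have hΔ : G.maxDegree = 0 := maxDegree_regular G hreg0
    have hm : G.edgeFinset.card = 0 := by
      have h0 := G.sum_degrees_eq_twice_card_edges
      have h1 : ∑ v, G.degree v = 0 := by
        rw [Finset.sum_congr rfl fun v _ => hreg0 v, Finset.sum_const, smul_zero]
      omega
    have htop : G = ⊤ := by
      ext u w
      have huw : u = w := Subsingleton.elim u w
      subst huw
      simp
    refine ⟨⟨?_, ?_⟩, ⟨fun _ => ⟨0, hreg0⟩, fun _ => ?_⟩, ⟨fun _ => htop, fun _ => ?_⟩⟩
    · rw [hρ, hδ]; simp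
    · rw [hρ, hΔ]; simp [Real.sqrt_nonneg]
    · rw [hρ, hδ]; simp
    · rw [hρ, hΔ]; simp
  · have hn2 : 1 < Fintype.card (Fin n) := by
      rw [Fintype.card_fin]
      have := NeZero.ne n
      omega
    have hcard : ((Fintype.card (Fin n) : ℕ) : ℝ) = (n : ℝ) := by rw [Fintype.card_fin]
    obtain ⟨hlow, hloweq⟩ := lower_main G hconn hn2
    obtain ⟨hup, hupeq⟩ := upper_main G hconn hn2
    rw [hcard] at hlow hloweq hup hupeq
    refine ⟨⟨hlow, hup⟩, ⟨hloweq, ?_⟩, ⟨hupeq, ?_⟩⟩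
    · rintro ⟨k, hk⟩
      have := lower_eq_of_regular G hk
      rw [hcard] at this
      exact this
    · intro htop
      have := top_eq G htop
      rw [hcard] at this
      exact this
end

section
/- Let G be a simple graph on n vertices whose Sombor eigenvalues all have equal absolute value, i.e., |ρ_1| = |ρ_2| = ... = |ρ_n|. Then G is either the empty graph on n vertices or a disjoint union of n/2 edges (a perfect matching); and conversely both of these graphs have all Sombor eigenvalues of equal absolute value. -/
open scoped Classical

open Matrix in
/-- A Hermitian real matrix satisfies `A² = c² I` iff all eigenvalues square to `c²`. -/
theorem aux_eig_sq_iff {m : Type*} [Fintype m] [DecidableEq m] {A : Matrix m m ℝ}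
    (hA : A.IsHermitian) (c : ℝ) :
    A * A = (c^2) • 1 ↔ ∀ i, (hA.eigenvalues i)^2 = c^2 := by
  set U := (hA.eigenvectorUnitary : Matrix m m ℝ) with hUdef
  have hUU : star U * U = 1 := Matrix.mem_unitaryGroup_iff'.mp hA.eigenvectorUnitary.2
  have hUU' : U * star U = 1 := Matrix.mem_unitaryGroup_iff.mp hA.eigenvectorUnitary.2
  have cancel : ∀ X : Matrix m m ℝ, U * (star U * X) = X := fun X => by
    rw [← mul_assoc, hUU', one_mul]
  have cancel' : ∀ X : Matrix m m ℝ, star U * (U * X) = X := fun X => by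
    rw [← mul_assoc, hUU, one_mul]
  have hdiag : star U * A * U = diagonal hA.eigenvalues := by
    have := hA.conjStarAlgAut_star_eigenvectorUnitary
    simpa [Unitary.conjStarAlgAut_star_apply] using this
  constructor
  · intro h i
    have h2 : (star U * A * U) * (star U * A * U) = star U * (A * A) * U := by
      simp only [mul_assoc]
      rw [cancel (A * U)]
    rw [hdiag, diagonal_mul_diagonal, h] at h2
    have h3 : star U * ((c ^ 2 : ℝ) • (1 : Matrix m m ℝ)) * U = (c^2) • 1 := by
      rw [mul_smul_one, Matrix.smul_mul, hUU]
    rw [h3] at h2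
    have := congrArg (fun M => M i i) h2
    simpa [pow_two] using this
  · intro h
    have hD : diagonal hA.eigenvalues * diagonal hA.eigenvalues = (c^2) • (1 : Matrix m m ℝ) := by
      rw [diagonal_mul_diagonal]
      ext i j
      rcases eq_or_ne i j with rfl | hij
      · simp [← pow_two, h]
      · simp [Matrix.diagonal_apply_ne _ hij, Matrix.one_apply_ne hij]
    conv_lhs => rw [hA.spectral_theorem]
    have hdr : diagonal (RCLike.ofReal ∘ hA.eigenvalues) = diagonal hA.eigenvalues := by simp
    rw [hdr]
    have h4 : U * diagonal hA.eigenvalues * star U * (U * diagonal hA.eigenvalues * star U)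
        = U * (diagonal hA.eigenvalues * diagonal hA.eigenvalues) * star U := by
      simp only [mul_assoc]
      rw [cancel' (diagonal hA.eigenvalues * star U)]
    simp only [Unitary.conjStarAlgAut_apply, Unitary.coe_star]
    rw [h4, hD, mul_smul_one, Matrix.smul_mul, hUU']

theorem stmt7 {n : ℕ} (G : SimpleGraph (Fin n)) :
    (∃ c : ℝ, ∀ i, |somborEigs G i| = c) ↔ (G = ⊥ ∨ ∀ v, G.degree v = 1) := by
  set S := somborMatrix G with hSdef
  have hS := somborMatrix_isHermitian G
  have hnn : ∀ i j, 0 ≤ S i j := by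
    intro i j
    simp only [hSdef, somborMatrix]
    split
    · exact Real.sqrt_nonneg _
    · exact le_refl 0
  have hpos : ∀ i j, G.Adj i j → 0 < S i j := by
    intro i j hadj
    have hd : 0 < G.degree i := by
      rw [G.degree_pos_iff_exists_adj]
      exact ⟨j, hadj⟩
    have hd' : (0:ℝ) < (G.degree i : ℝ)^2 + (G.degree j : ℝ)^2 := by
      have : (0:ℝ) < (G.degree i : ℝ) := by exact_mod_cast hd
      positivity
    simp only [hSdef, somborMatrix, if_pos hadj]
    exact Real.sqrt_pos.mpr hd'
  constructor
  · rintro ⟨c, hc⟩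
    have hsq : S * S = (c^2) • 1 := by
      refine (aux_eig_sq_iff hS c).mpr (fun i => ?_)
      rw [← sq_abs]
      have : |somborEigs G i| = c := hc i
      rw [show (somborMatrix_isHermitian G).eigenvalues = somborEigs G from rfl, this]
    by_cases hc0 : c = 0
    · left
      subst hc0
      rw [show ((0:ℝ)^2 • (1 : Matrix (Fin n) (Fin n) ℝ)) = 0 by simp] at hsq
      ext i j
      simp only [SimpleGraph.bot_adj, iff_false]
      intro hadj
      have h1 : (S * S) i i = 0 := by rw [hsq]; rfl
      have h2 : 0 < (S * S) i i := by
        rw [Matrix.mul_apply]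
        refine Finset.sum_pos' (fun k _ => mul_nonneg (hnn i k) (hnn k i)) ?_
        exact ⟨j, Finset.mem_univ j, mul_pos (hpos i j hadj) (hpos j i hadj.symm)⟩
      linarith
    · right
      intro v
      have hc2 : (0:ℝ) < c^2 := by positivity
      have hex : ∃ k, G.Adj v k := by
        by_contra h
        push_neg at h
        have h1 : (S * S) v v = 0 := by
          rw [Matrix.mul_apply]
          refine Finset.sum_eq_zero (fun k _ => ?_)
          have : S v k = 0 := by simp [hSdef, somborMatrix, h k]
          rw [this, zero_mul]
        have h2 : (S * S) v v = c^2 := by rw [hsq]; simp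
        rw [h1] at h2
        linarith
      have hone : ∀ j k, G.Adj v j → G.Adj v k → j = k := by
        intro j k hj hk
        by_contra hne
        have h0 : (S * S) j k = 0 := by
          rw [hsq]
          simp [Matrix.one_apply_ne hne]
        have hp : 0 < (S * S) j k := by
          rw [Matrix.mul_apply]
          refine Finset.sum_pos' (fun m _ => mul_nonneg (hnn j m) (hnn m k)) ?_
          exact ⟨v, Finset.mem_univ v, mul_pos (hpos j v hj.symm) (hpos v k hk)⟩
        linarith
      obtain ⟨k, hk⟩ := hex
      show (G.neighborFinset v).card = 1
      rw [Finset.card_eq_one]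
      refine ⟨k, ?_⟩
      ext a
      simp only [SimpleGraph.mem_neighborFinset, Finset.mem_singleton]
      exact ⟨fun ha => hone a k ha hk, fun ha => ha ▸ hk⟩
  · rintro (rfl | hdeg)
    · refine ⟨0, fun i => ?_⟩
      have hz : somborMatrix (⊥ : SimpleGraph (Fin n)) = 0 := by
        ext i j
        simp [somborMatrix]
      have hsq : somborMatrix (⊥ : SimpleGraph (Fin n)) * somborMatrix (⊥ : SimpleGraph (Fin n))
          = ((0:ℝ)^2) • 1 := by
        rw [hz]; simp
      have h0 := (aux_eig_sq_iff (somborMatrix_isHermitian ⊥) 0).mp hsq i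
      have : somborEigs (⊥ : SimpleGraph (Fin n)) i = 0 := by
        have h0' := pow_eq_zero_iff (two_ne_zero) |>.mp (h0.trans (zero_pow two_ne_zero))
        unfold somborEigs
        convert h0'
      simp [this]
    · refine ⟨Real.sqrt 2, fun i => ?_⟩
      have hSentry : ∀ a b, S a b = if G.Adj a b then Real.sqrt 2 else 0 := by
        intro a b
        simp only [hSdef, somborMatrix, hdeg a, hdeg b]
        norm_num
      have hsq : S * S = ((Real.sqrt 2)^2) • 1 := by
        ext a b
        rw [Matrix.mul_apply]
        have hterm : ∀ k, S a k * S k b = if G.Adj a k ∧ G.Adj k b then (2:ℝ) else 0 := by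
          intro k
          rw [hSentry a k, hSentry k b]
          by_cases h1 : G.Adj a k <;> by_cases h2 : G.Adj k b <;>
            simp [h1, h2, Real.mul_self_sqrt (by norm_num : (0:ℝ) ≤ 2)]
        simp only [hterm]
        rcases eq_or_ne a b with rfl | hab
        · have hcond : ∀ k, (G.Adj a k ∧ G.Adj k a) ↔ G.Adj a k := by
            intro k
            exact ⟨fun h => h.1, fun h => ⟨h, h.symm⟩⟩
          simp only [hcond]
          have : (∑ k, if G.Adj a k then (2:ℝ) else 0)
              = ∑ k ∈ Finset.univ.filter (G.Adj a), (2:ℝ) := by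
            rw [Finset.sum_filter]
          rw [this]
          rw [Finset.sum_const]
          have hcard : (Finset.univ.filter (G.Adj a)).card = 1 := by
            rw [← SimpleGraph.neighborFinset_eq_filter]
            exact hdeg a
          rw [hcard]
          simp [Real.sq_sqrt (by norm_num : (0:ℝ) ≤ 2)]
        · have hz : ∀ k ∈ Finset.univ, (if G.Adj a k ∧ G.Adj k b then (2:ℝ) else 0) = 0 := by
            intro k _
            rw [if_neg]
            rintro ⟨h1, h2⟩
            obtain ⟨x, hx⟩ := Finset.card_eq_one.mp (hdeg k)
            have ha' : a ∈ G.neighborFinset k := by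
              rw [SimpleGraph.mem_neighborFinset]; exact h1.symm
            have hb' : b ∈ G.neighborFinset k := by
              rw [SimpleGraph.mem_neighborFinset]; exact h2
            rw [hx, Finset.mem_singleton] at ha' hb'
            exact hab (ha'.trans hb'.symm)
          rw [Finset.sum_eq_zero hz]
          simp [Matrix.one_apply_ne hab]
      have h2 := (aux_eig_sq_iff hS (Real.sqrt 2)).mp hsq i
      have : (somborEigs G i)^2 = (Real.sqrt 2)^2 := h2
      calc |somborEigs G i| = Real.sqrt ((somborEigs G i)^2) := (Real.sqrt_sq_eq_abs _).symm
        _ = Real.sqrt ((Real.sqrt 2)^2) := by rw [this]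
        _ = Real.sqrt 2 := by rw [Real.sqrt_sq (Real.sqrt_nonneg 2)]
end

section
/- Let G be a tree on n ≥ 2 vertices. Then the Sombor spectral radius satisfies ρ_1(G) ≤ √((n−1)(n²−2n+2)), with equality if and only if G is the star K_{1,n−1}. -/
open scoped Classical

section Helpers

variable {m : Type*} [Fintype m] [DecidableEq m]

lemma herm_spectrum_eq {A : Matrix m m ℝ} (hA : A.IsHermitian) :
    spectrum ℝ A = Set.range hA.eigenvalues := by
  have key : spectrum ℝ A
      = spectrum ℝ (Matrix.diagonal (RCLike.ofReal ∘ hA.eigenvalues) : Matrix m m ℝ) := by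
    conv_lhs => rw [hA.spectral_theorem, Unitary.conjStarAlgAut_apply]
    have h2 : star (hA.eigenvectorUnitary : Matrix m m ℝ)
        = ((Unitary.toUnits hA.eigenvectorUnitary)⁻¹ : (Matrix m m ℝ)ˣ) := by
      rw [show ((Unitary.toUnits hA.eigenvectorUnitary)⁻¹ : (Matrix m m ℝ)ˣ)
          = Unitary.toUnits (hA.eigenvectorUnitary)⁻¹ from rfl]
      rw [← Unitary.star_eq_inv]
      rfl
    rw [h2,
      show (hA.eigenvectorUnitary : Matrix m m ℝ)
        = ((Unitary.toUnits hA.eigenvectorUnitary : (Matrix m m ℝ)ˣ) : Matrix m m ℝ) from rfl,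
      spectrum.units_conjugate]
  rw [key,
    show (RCLike.ofReal ∘ hA.eigenvalues : m → ℝ) = hA.eigenvalues from funext fun i => by simp,
    spectrum_diagonal]

lemma eig_of_mulVec {A : Matrix m m ℝ} (hA : A.IsHermitian) {x : m → ℝ} {μ : ℝ}
    (hx : x ≠ 0) (hAx : A.mulVec x = μ • x) : ∃ i, hA.eigenvalues i = μ := by
  have h1 : Module.End.HasEigenvalue (Matrix.toLin' A) μ := by
    apply Module.End.hasEigenvalue_of_hasEigenvector (x := x)
    refine ⟨?_, hx⟩
    rw [Module.End.mem_eigenspace_iff, Matrix.toLin'_apply, hAx]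
  have h2 : μ ∈ spectrum ℝ A := by
    rw [← AlgEquiv.spectrum_eq (Matrix.toLinAlgEquiv <| Pi.basisFun ℝ m)]
    exact h1.mem_spectrum
  rw [herm_spectrum_eq hA] at h2
  exact h2.imp fun i h => h

lemma herm_trace_eq {A : Matrix m m ℝ} (hA : A.IsHermitian) :
    Matrix.trace A = ∑ i, hA.eigenvalues i := by
  conv_lhs => rw [hA.spectral_theorem, Unitary.conjStarAlgAut_apply]
  rw [Matrix.trace_mul_cycle,
    Unitary.star_mul_self_of_mem hA.eigenvectorUnitary.2]
  simp [Matrix.trace_diagonal]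

lemma herm_trace_sq_eq {A : Matrix m m ℝ} (hA : A.IsHermitian) :
    Matrix.trace (A * A) = ∑ i, hA.eigenvalues i ^ 2 := by
  conv_lhs => rw [hA.spectral_theorem, Unitary.conjStarAlgAut_apply]
  rw [show ∀ (U D : Matrix m m ℝ),
      U * D * star U * (U * D * star U) = U * (D * (star U * U) * D) * star U from
    fun U D => by noncomm_ring,
    Unitary.star_mul_self_of_mem hA.eigenvectorUnitary.2]
  rw [Matrix.trace_mul_cycle,
    Unitary.star_mul_self_of_mem hA.eigenvectorUnitary.2]
  simp [Matrix.diagonal_mul_diagonal, Matrix.trace_diagonal, sq]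

end Helpers

section GraphHelpers

variable {V : Type*} {G : SimpleGraph V}

lemma tree_sign (htree : G.IsTree) :
    ∃ ε : V → ℝ, (∀ v, ε v = 1 ∨ ε v = -1) ∧ ∀ u v, G.Adj u v → ε u * ε v = -1 := by
  obtain ⟨r⟩ := htree.isConnected.nonempty
  choose f hf hf' using (htree.existsUnique_path r ·)
  have key : ∀ u v, G.Adj u v →
      (f v).length = (f u).length + 1 ∨ (f u).length = (f v).length + 1 := by
    intro u v h
    by_cases hu : u ∈ (f v).support
    · left
      have hsplit := ((f v).take_spec hu).symm
      have hdrop : (f v).dropUntil u hu = SimpleGraph.Walk.cons h .nil := by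
        refine (htree.existsUnique_path u v).unique ((hf v).dropUntil hu) ?_
        exact SimpleGraph.Walk.IsPath.nil.cons (by simpa using h.ne)
      have htake : (f v).takeUntil u hu = f u := hf' u _ ((hf v).takeUntil hu)
      have := congrArg SimpleGraph.Walk.length hsplit
      rw [SimpleGraph.Walk.length_append, hdrop, htake] at this
      simpa using this
    · right
      have hconc : ((f v).concat h.symm).IsPath := by
        rw [SimpleGraph.Walk.isPath_def, SimpleGraph.Walk.support_concat]
        simp only [List.concat_eq_append, List.nodup_append]
        refine ⟨(hf v).support_nodup, List.nodup_singleton _, ?_⟩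
        intro a ha b hb
        simp only [List.mem_singleton] at hb
        subst hb; rintro rfl; exact hu ha
      have h2 := congrArg SimpleGraph.Walk.length (hf' u _ hconc)
      rw [SimpleGraph.Walk.length_concat] at h2
      omega
  refine ⟨fun v => if Even (f v).length then 1 else -1,
    fun v => by by_cases h : Even (f v).length <;> simp [h], ?_⟩
  intro u v h
  rcases key u v h with h1 | h1 <;>
  · by_cases h2 : Even (f u).length <;>
      simp [h1, h2, Nat.even_add_one] at * <;> simp [h2, Nat.even_add_one, *]

lemma triangle_cycle {u v w : V} (h1 : G.Adj v w) (h2 : G.Adj w u) (h3 : G.Adj u v) :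
    ¬ G.IsAcyclic := by
  intro hac
  exact hac (SimpleGraph.Walk.cons h1 (SimpleGraph.Walk.cons h2 (SimpleGraph.Walk.cons h3 .nil)))
    (by
      rw [SimpleGraph.Walk.isCycle_def]
      refine ⟨?_, by simp, ?_⟩
      · rw [SimpleGraph.Walk.isTrail_def]
        simp [h1.ne, h2.ne, h3.ne, h1.ne', h2.ne', h3.ne', Sym2.eq_iff]
      · simp [h1.ne, h2.ne, h3.ne, h1.ne', h2.ne', h3.ne'])

lemma conn_deg_pos [Fintype V] (hc : G.Connected) (hV : 1 < Fintype.card V) (v : V) :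
    0 < G.degree v := by
  haveI : Nontrivial V := Fintype.one_lt_card_iff_nontrivial.mp hV
  obtain ⟨w, hw⟩ := exists_ne v
  obtain ⟨p⟩ := hc.preconnected v w
  rw [G.degree_pos_iff_exists_adj v]
  cases p with
  | nil => exact absurd rfl hw.symm
  | cons h q => exact ⟨_, h⟩

lemma nbr_filter [Fintype V] (G : SimpleGraph V) (i : V) :
    Finset.univ.filter (G.Adj i ·) = G.neighborFinset i := by
  ext j; simp

lemma sombor_trace [Fintype V] (G : SimpleGraph V) : Matrix.trace (somborMatrix G) = 0 := by
  unfold Matrix.trace somborMatrix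
  simp [Matrix.diag]

lemma sombor_trace_sq [Fintype V] (G : SimpleGraph V) :
    Matrix.trace (somborMatrix G * somborMatrix G) = 2 * ∑ i, (G.degree i : ℝ) ^ 3 := by
  have hsq : ∀ i j, somborMatrix G i j * somborMatrix G j i
      = if G.Adj i j then (G.degree i : ℝ) ^ 2 + (G.degree j : ℝ) ^ 2 else 0 := by
    intro i j
    unfold somborMatrix
    by_cases h : G.Adj i j
    · simp only [h, h.symm, if_true, add_comm ((G.degree j : ℝ)^2)]
      exact Real.mul_self_sqrt (by positivity)
    · simp [h, fun h' => h ((G.adj_comm i j).mpr h')]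
  unfold Matrix.trace
  simp only [Matrix.diag, Matrix.mul_apply, hsq]
  have hrow : ∀ i : V, ∑ j, (if G.Adj i j then (G.degree i : ℝ) ^ 2 + (G.degree j : ℝ) ^ 2 else 0)
      = (G.degree i : ℝ) ^ 3 + ∑ j ∈ G.neighborFinset i, (G.degree j : ℝ) ^ 2 := by
    intro i
    rw [← Finset.sum_filter, nbr_filter, Finset.sum_add_distrib, Finset.sum_const,
      SimpleGraph.card_neighborFinset_eq_degree, nsmul_eq_mul]
    ring
  rw [Finset.sum_congr rfl fun i _ => hrow i, Finset.sum_add_distrib]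
  have hswap : ∑ i, ∑ j ∈ G.neighborFinset i, (G.degree j : ℝ) ^ 2
      = ∑ i, (G.degree i : ℝ) ^ 3 := by
    simp only [← nbr_filter, Finset.sum_filter]
    rw [Finset.sum_comm]
    have : ∀ j : V, ∑ i, (if G.Adj i j then (G.degree j : ℝ) ^ 2 else 0)
        = (G.degree j : ℝ) ^ 3 := by
      intro j
      have : ∀ i, G.Adj i j ↔ G.Adj j i := fun i => G.adj_comm i j
      simp only [this]
      rw [← Finset.sum_filter, nbr_filter, Finset.sum_const,
        SimpleGraph.card_neighborFinset_eq_degree, nsmul_eq_mul]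
      ring
    rw [Finset.sum_congr rfl fun j _ => this j]
  rw [hswap]; ring

end GraphHelpers

lemma cube_bound {x c : ℝ} (h1 : 1 ≤ x) (h2 : x ≤ c) : x ^ 3 ≤ 1 + (x - 1) * (c ^ 2 + c + 1) := by
  nlinarith [sq_nonneg (x - 1), sq_nonneg (x - c), mul_nonneg (sub_nonneg.2 h1) (sub_nonneg.2 h2)]

lemma cube_eq {x c : ℝ} (h1 : 1 ≤ x) (h2 : x ≤ c)
    (h : x ^ 3 = 1 + (x - 1) * (c ^ 2 + c + 1)) : x = 1 ∨ x = c := by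
  have hf : (x - 1) * (x ^ 2 + x - (c ^ 2 + c)) = 0 := by nlinarith
  rcases mul_eq_zero.mp hf with h' | h'
  · left; linarith
  · right
    have : (x - c) * (x + c + 1) = 0 := by nlinarith
    rcases mul_eq_zero.mp this with h'' | h''
    · linarith
    · nlinarith

theorem stmt9 {n : ℕ} (hn : 2 ≤ n) (G : SimpleGraph (Fin n)) (htree : G.IsTree) :
    somborSpecRad G ≤ Real.sqrt (((n : ℝ) - 1) * ((n : ℝ) ^ 2 - 2 * n + 2)) ∧
    (somborSpecRad G = Real.sqrt (((n : ℝ) - 1) * ((n : ℝ) ^ 2 - 2 * n + 2)) ↔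
      ∃ v, ∀ w, w ≠ v → G.Adj v w) := by
  have hcard : Fintype.card (Fin n) = n := Fintype.card_fin n
  have hnR : (2:ℝ) ≤ (n:ℝ) := by exact_mod_cast hn
  set S := somborMatrix G with hSdef
  have hS := somborMatrix_isHermitian G
  set B : ℝ := ((n:ℝ) - 1) * ((n:ℝ)^2 - 2*n + 2) with hBdef
  have hB0 : 0 ≤ B := by
    rw [hBdef]
    have h2 : (0:ℝ) ≤ (n:ℝ)^2 - 2*n + 2 := by nlinarith [sq_nonneg ((n:ℝ)-1)]
    exact mul_nonneg (by linarith) h2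
  -- degrees
  have hdeg1 : ∀ v, 1 ≤ G.degree v := fun v =>
    conn_deg_pos htree.isConnected (by omega) v
  have hdeg1R : ∀ v, (1:ℝ) ≤ (G.degree v : ℝ) := fun v => by exact_mod_cast hdeg1 v
  have hdegnR : ∀ v, (G.degree v : ℝ) ≤ (n:ℝ) - 1 := by
    intro v
    have h := G.degree_lt_card_verts v
    rw [hcard] at h
    have : (G.degree v : ℝ) < (n:ℝ) := by exact_mod_cast h
    have h2 : G.degree v + 1 ≤ n := h
    have : ((G.degree v : ℝ)) + 1 ≤ (n:ℝ) := by exact_mod_cast h2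
    linarith
  -- handshake
  have hE : G.edgeFinset.card + 1 = n := by
    have h := htree.card_edgeFinset
    rwa [hcard] at h
  have hsum : ∑ v, (G.degree v : ℝ) = 2 * ((n:ℝ) - 1) := by
    have h1 := G.sum_degrees_eq_twice_card_edges
    have h2 : ((∑ v, G.degree v : ℕ) : ℝ) = ∑ v, (G.degree v : ℝ) := by push_cast; rfl
    rw [← h2, h1]
    have : ((G.edgeFinset.card : ℕ) : ℝ) = (n:ℝ) - 1 := by
      have : ((G.edgeFinset.card : ℕ) : ℝ) + 1 = (n:ℝ) := by exact_mod_cast hE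
      linarith
    push_cast at this ⊢
    rw [this]
  -- F bound
  set K : ℝ := ((n:ℝ)-1)^2 + ((n:ℝ)-1) + 1 with hKdef
  set F : ℝ := ∑ i, (G.degree i : ℝ)^3 with hFdef
  have hRHS : ∑ i : Fin n, (1 + ((G.degree i:ℝ) - 1) * K) = B := by
    rw [Finset.sum_add_distrib, Finset.sum_const, Finset.card_univ, hcard, ← Finset.sum_mul,
      Finset.sum_sub_distrib, hsum, Finset.sum_const, Finset.card_univ, hcard]
    rw [hBdef, hKdef]
    push_cast
    ring
  have hFB : F ≤ B := by
    rw [hFdef, ← hRHS]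
    refine Finset.sum_le_sum fun i _ => ?_
    have h := cube_bound (hdeg1R i) (hdegnR i)
    rw [hKdef]; exact h
  have hFpos : 0 < F := by
    rw [hFdef]
    refine Finset.sum_pos (fun i _ => ?_) ⟨⟨0, by omega⟩, Finset.mem_univ _⟩
    have := hdeg1R i; positivity
  -- eigenvalues
  have h0 : ∑ i, somborEigs G i = 0 := by
    rw [show somborEigs G = hS.eigenvalues from rfl, ← herm_trace_eq hS]
    exact sombor_trace G
  have h2 : ∑ i, somborEigs G i ^ 2 = 2 * F := by
    rw [show somborEigs G = hS.eigenvalues from rfl, ← herm_trace_sq_eq hS, hFdef]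
    exact sombor_trace_sq G
  haveI : Nonempty (Fin n) := ⟨⟨0, by omega⟩⟩
  set ρ := somborSpecRad G with hρdef
  have hbdd : BddAbove (Set.range (somborEigs G)) := (Set.finite_range _).bddAbove
  have hle : ∀ i, somborEigs G i ≤ ρ := fun i => le_ciSup hbdd i
  obtain ⟨i0, hi0⟩ : ∃ i0, ∀ j, somborEigs G j ≤ somborEigs G i0 := Finite.exists_max _
  have hρeq : ρ = somborEigs G i0 := le_antisymm (ciSup_le hi0) (hle i0)
  have hρpos : 0 < ρ := by
    by_contra hc
    push_neg at hc
    have hz : ∀ i ∈ Finset.univ, somborEigs G i = 0 :=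
      Finset.sum_eq_zero_iff_of_nonpos (fun i _ => (hle i).trans hc) |>.mp h0
    have : (2:ℝ) * F = 0 := by
      rw [← h2]
      exact Finset.sum_eq_zero fun i hi => by rw [hz i hi]; ring
    linarith
  -- bipartite symmetry
  obtain ⟨ε, hε1, hεadj⟩ := tree_sign htree
  have hεne : ∀ v, ε v ≠ 0 := fun v => by rcases hε1 v with h | h <;> rw [h] <;> norm_num
  have hεneg : ∀ u v, G.Adj u v → ε v = -(ε u) := by
    intro u v h
    have h2 : ε u * ε u = 1 := by rcases hε1 u with h' | h' <;> rw [h'] <;> norm_num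
    have h3 : ε u * (ε u * ε v) = ε u * (-1) := by rw [hεadj u v h]
    rw [← mul_assoc, h2, one_mul] at h3
    linarith
  set x : Fin n → ℝ := ⇑(hS.eigenvectorBasis i0) with hxdef
  have hx : S.mulVec x = somborEigs G i0 • x := hS.mulVec_eigenvectorBasis i0
  have hxne : x ≠ 0 := by
    have h := hS.eigenvectorBasis.orthonormal.ne_zero i0
    intro hcon
    apply h
    ext j
    exact congrFun hcon j
  set y : Fin n → ℝ := fun i => ε i * x i with hydef
  have hyne : y ≠ 0 := by
    obtain ⟨j, hj⟩ := Function.ne_iff.mp hxne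
    refine Function.ne_iff.mpr ⟨j, ?_⟩
    simp only [hydef, Pi.zero_apply]
    exact mul_ne_zero (hεne j) hj
  have hy : S.mulVec y = (-(somborEigs G i0)) • y := by
    funext i
    have hterm : ∀ j, S i j * (ε j * x j) = -(ε i) * (S i j * x j) := by
      intro j
      by_cases hadj : G.Adj i j
      · rw [hεneg i j hadj]; ring
      · have hz : S i j = 0 := by simp [hSdef, somborMatrix, hadj]
        rw [hz]; ring
    have hmv : ∀ z : Fin n → ℝ, S.mulVec z i = ∑ j, S i j * z j := fun z => rfl
    rw [hmv, Pi.smul_apply]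
    calc ∑ j, S i j * y j = ∑ j, -(ε i) * (S i j * x j) :=
          Finset.sum_congr rfl fun j _ => hterm j
      _ = -(ε i) * ∑ j, S i j * x j := by rw [Finset.mul_sum]
      _ = -(ε i) * (somborEigs G i0 * x i) := by
          rw [← hmv, hx, Pi.smul_apply, smul_eq_mul]
      _ = (-(somborEigs G i0)) * y i := by rw [hydef]; ring
  obtain ⟨j0, hj0⟩ := eig_of_mulVec hS hyne hy
  have hij : i0 ≠ j0 := by
    intro hcon
    rw [← hcon] at hj0
    rw [hρeq] at hρpos
    rw [show (somborMatrix_isHermitian G).eigenvalues = somborEigs G from rfl] at hj0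
    linarith
  have hkey : ρ^2 ≤ F := by
    have hsub := Finset.sum_le_sum_of_subset_of_nonneg
      (Finset.subset_univ ({i0, j0} : Finset (Fin n)))
      (fun i _ _ => sq_nonneg (somborEigs G i))
    rw [Finset.sum_pair hij, h2] at hsub
    have hj0' : somborEigs G j0 = -(somborEigs G i0) := hj0
    rw [hj0', ← hρeq] at hsub
    nlinarith
  have part1 : ρ ≤ Real.sqrt B := by
    have hle2 : ρ^2 ≤ B := le_trans hkey hFB
    calc ρ = Real.sqrt (ρ^2) := (Real.sqrt_sq hρpos.le).symm
      _ ≤ Real.sqrt B := Real.sqrt_le_sqrt hle2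
  have star_to_eq : (∃ v, ∀ w, w ≠ v → G.Adj v w) → ρ = Real.sqrt B := by
    rintro ⟨v, hv⟩
    -- degrees of the star
    have hNv : G.neighborFinset v = Finset.univ.erase v := by
      ext w
      simp only [SimpleGraph.mem_neighborFinset, Finset.mem_erase, Finset.mem_univ, and_true]
      exact ⟨fun h => h.ne', fun h => hv w h⟩
    have hdv : G.degree v = n - 1 := by
      rw [← SimpleGraph.card_neighborFinset_eq_degree, hNv,
        Finset.card_erase_of_mem (Finset.mem_univ v), Finset.card_univ, hcard]
    have hdw : ∀ w, w ≠ v → G.degree w = 1 := by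
      intro w hw
      have hNw : G.neighborFinset w = {v} := by
        ext u
        simp only [SimpleGraph.mem_neighborFinset, Finset.mem_singleton]
        constructor
        · intro hadj
          by_contra hu
          exact triangle_cycle (hv w hw) hadj ((hv u hu).symm) htree.IsAcyclic
        · rintro rfl
          exact (hv w hw).symm
      rw [← SimpleGraph.card_neighborFinset_eq_degree, hNw, Finset.card_singleton]
    have hn1cast : ((n - 1 : ℕ) : ℝ) = (n:ℝ) - 1 := by
      have : 1 ≤ n := by omega
      push_cast [this]
      ring
    set c : ℝ := Real.sqrt (((n:ℝ)-1)^2 + 1) with hcdef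
    have hμ : Real.sqrt B = Real.sqrt ((n:ℝ)-1) * c := by
      rw [hBdef, hcdef, Real.sqrt_mul (by linarith : (0:ℝ) ≤ (n:ℝ)-1)]
      congr 1
      ring
    set z : Fin n → ℝ := fun u => if u = v then Real.sqrt ((n:ℝ)-1) else 1 with hzdef
    have hzne : z ≠ 0 := by
      haveI : Nontrivial (Fin n) := Fintype.one_lt_card_iff_nontrivial.mp (by omega)
      obtain ⟨w, hw⟩ := exists_ne v
      refine Function.ne_iff.mpr ⟨w, ?_⟩
      simp [hzdef, hw]
    have hSz : S.mulVec z = Real.sqrt B • z := by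
      funext u
      have hmv : S.mulVec z u = ∑ j, S u j * z j := rfl
      rw [hmv, Pi.smul_apply, smul_eq_mul]
      by_cases hu : u = v
      · subst hu
        have hterm : ∀ j, S u j * z j = if j = u then 0 else c := by
          intro j
          by_cases hj : j = u
          · subst hj
            simp [hSdef, somborMatrix]
          · have hadj : G.Adj u j := hv j hj
            have hzj : z j = 1 := if_neg hj
            simp only [hSdef, somborMatrix, hadj, if_true, hzj, mul_one, hcdef, if_neg hj]
            rw [hdv, hdw j hj, hn1cast]
            norm_num
        rw [Finset.sum_congr rfl fun j _ => hterm j]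
        rw [← Finset.sum_erase_add _ _ (Finset.mem_univ u), if_pos rfl, add_zero]
        rw [Finset.sum_congr rfl fun j hj => if_neg (Finset.mem_erase.mp hj).1]
        rw [Finset.sum_const, Finset.card_erase_of_mem (Finset.mem_univ u), Finset.card_univ,
          hcard, nsmul_eq_mul, hn1cast]
        have hzu : z u = Real.sqrt ((n:ℝ)-1) := if_pos rfl
        have hss : Real.sqrt ((n:ℝ)-1) * Real.sqrt ((n:ℝ)-1) = (n:ℝ)-1 :=
          Real.mul_self_sqrt (by linarith)
        rw [hzu, hμ]
        linear_combination (-c) * hss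
      · have hterm : ∀ j, S u j * z j = if j = v then c * Real.sqrt ((n:ℝ)-1) else 0 := by
          intro j
          by_cases hj : j = v
          · subst hj
            have hadj : G.Adj u j := (hv u hu).symm
            have hzj : z j = Real.sqrt ((n:ℝ)-1) := if_pos rfl
            simp only [hSdef, somborMatrix, hadj, if_true, hzj, hcdef]
            rw [hdv, hdw u hu]
            congr 2
            rw [hn1cast]
            norm_num
            ring
          · have hadj : ¬ G.Adj u j := by
              intro hadj
              by_cases huv : j = u
              · subst huv; exact G.loopless.irrefl _ hadj
              · exact triangle_cycle (hv u hu) hadj ((hv j hj).symm) htree.IsAcyclic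
            simp [hSdef, somborMatrix, hadj, if_neg hj]
        rw [Finset.sum_congr rfl fun j _ => hterm j, Finset.sum_ite_eq' Finset.univ v]
        rw [if_pos (Finset.mem_univ v)]
        have hzu : z u = 1 := if_neg hu
        rw [hzu, hμ]
        ring
    obtain ⟨i, hi⟩ := eig_of_mulVec hS hzne hSz
    have : Real.sqrt B ≤ ρ := by
      rw [← hi]
      exact hle i
    exact le_antisymm part1 this
  refine ⟨part1, ?_, star_to_eq⟩
  -- equality implies star
  intro heq
  have hρ2 : ρ^2 = B := by rw [heq, Real.sq_sqrt hB0]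
  have hFeqB : F = B := le_antisymm hFB (by linarith)
  have htermeq : ∀ i ∈ Finset.univ, (G.degree i : ℝ)^3 = 1 + ((G.degree i:ℝ) - 1) * K := by
    refine (Finset.sum_eq_sum_iff_of_le (fun i _ => ?_)).mp ?_
    · rw [hKdef]; exact cube_bound (hdeg1R i) (hdegnR i)
    · rw [show ∑ i, (G.degree i : ℝ)^3 = F from rfl, hFeqB, hRHS]
  have hdich : ∀ i, (G.degree i:ℝ) = 1 ∨ (G.degree i:ℝ) = (n:ℝ)-1 := by
    intro i
    refine cube_eq (hdeg1R i) (hdegnR i) ?_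
    have h := htermeq i (Finset.mem_univ i)
    rw [hKdef] at h
    exact h
  have hex : ∃ v, (G.degree v:ℝ) = (n:ℝ)-1 := by
    by_cases hn2 : n = 2
    · refine ⟨⟨0, by omega⟩, ?_⟩
      rcases hdich ⟨0, by omega⟩ with h | h
      · rw [h, hn2]; norm_num
      · exact h
    · by_contra hc
      push_neg at hc
      have hall : ∀ i ∈ Finset.univ, (G.degree i:ℝ) = 1 := fun i _ =>
        (hdich i).resolve_right (hc i)
      rw [Finset.sum_congr rfl hall, Finset.sum_const, Finset.card_univ, hcard,
        nsmul_eq_mul, mul_one] at hsum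
      have : (3:ℝ) ≤ (n:ℝ) := by exact_mod_cast (by omega : 3 ≤ n)
      linarith
  obtain ⟨v, hdvR⟩ := hex
  refine ⟨v, ?_⟩
  have hdvN : G.degree v = n - 1 := by
    have h1 : ((n - 1 : ℕ) : ℝ) = (n:ℝ) - 1 := by
      have : 1 ≤ n := by omega
      push_cast [this]
      ring
    exact_mod_cast hdvR.trans h1.symm
  have hsub : G.neighborFinset v ⊆ Finset.univ.erase v := by
    intro w hw
    exact Finset.mem_erase.mpr ⟨(SimpleGraph.mem_neighborFinset _ _ _ |>.mp hw).ne',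
      Finset.mem_univ w⟩
  have hcardle : (Finset.univ.erase v).card ≤ (G.neighborFinset v).card := by
    rw [SimpleGraph.card_neighborFinset_eq_degree, hdvN,
      Finset.card_erase_of_mem (Finset.mem_univ v), Finset.card_univ, hcard]
  have hNveq := Finset.eq_of_subset_of_card_le hsub hcardle
  intro w hw
  have : w ∈ G.neighborFinset v := by
    rw [hNveq]
    exact Finset.mem_erase.mpr ⟨hw, Finset.mem_univ w⟩
  exact SimpleGraph.mem_neighborFinset _ _ _ |>.mp this
end

section
/- Let G be a simple graph on n vertices with Sombor energy E(G) and forgotten topological index F. Then √(2F + n(n−1)|det S(G)|^{2/n}) ≤ E(G) ≤ √(2(n−1)F + n|det S(G)|^{2/n}). -/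
open scoped Classical

lemma amgm_nary {ι : Type*} (s : Finset ι) (x : ι → ℝ) (hx : ∀ i ∈ s, 0 ≤ x i) :
    (s.card : ℝ) * (∏ i ∈ s, x i) ^ ((1:ℝ)/s.card) ≤ ∑ i ∈ s, x i := by
  rcases s.eq_empty_or_nonempty with rfl | hs
  · simp
  have hc : (0:ℝ) < s.card := by exact_mod_cast Finset.card_pos.mpr hs
  have h := Real.geom_mean_le_arith_mean_weighted s (fun _ => 1/(s.card:ℝ)) x
    (fun i _ => by positivity) (by
      rw [Finset.sum_const, nsmul_eq_mul]
      field_simp) hx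
  have hprod : (∏ i ∈ s, x i ^ ((1:ℝ)/s.card)) = (∏ i ∈ s, x i) ^ ((1:ℝ)/s.card) :=
    Real.finset_prod_rpow s x hx _
  rw [hprod] at h
  have := mul_le_mul_of_nonneg_left h (le_of_lt hc)
  calc (s.card : ℝ) * (∏ i ∈ s, x i) ^ ((1:ℝ)/s.card) ≤ (s.card:ℝ) * ∑ i ∈ s, 1/(s.card:ℝ) * x i := this
    _ = ∑ i ∈ s, x i := by
        rw [Finset.mul_sum]
        apply Finset.sum_congr rfl
        intro i _
        field_simp

lemma kober_lower {ι : Type*} (s : Finset ι) (x : ι → ℝ) (hx : ∀ i ∈ s, 0 ≤ x i) :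
    (∑ i ∈ s, (x i)^2) + (s.card:ℝ) * ((s.card:ℝ)-1) * (∏ i ∈ s, x i) ^ ((2:ℝ)/s.card)
      ≤ (∑ i ∈ s, x i)^2 := by
  induction s using Finset.cons_induction with
  | empty => simp
  | cons a s ha ih =>
    have hx' : ∀ i ∈ s, 0 ≤ x i := fun i hi => hx i (Finset.mem_cons_of_mem hi)
    have ht : 0 ≤ x a := hx a (Finset.mem_cons_self a s)
    set t := x a with htdef
    set P := ∏ i ∈ s, x i with hPdef
    set Q := ∑ i ∈ s, (x i)^2 with hQdef
    set S := ∑ i ∈ s, x i with hSdef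
    have hP : 0 ≤ P := Finset.prod_nonneg hx'
    have hS0 : 0 ≤ S := Finset.sum_nonneg hx'
    rw [Finset.sum_cons, Finset.sum_cons, Finset.prod_cons, Finset.card_cons]
    rcases Nat.eq_zero_or_pos s.card with hn0 | hnpos
    · rw [Finset.card_eq_zero] at hn0
      subst hn0
      simp only [Finset.sum_empty, Finset.prod_empty, Finset.card_empty, mul_one]
      norm_num
    have hn : (1:ℝ) ≤ (s.card : ℝ) := by exact_mod_cast hnpos
    have hnne : (s.card : ℝ) ≠ 0 := by linarith
    set n : ℝ := (s.card : ℝ) with hndef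
    have ihP : Q + n * (n-1) * P ^ ((2:ℝ)/n) ≤ S^2 := ih hx'
    have hrpownn : 0 ≤ P ^ ((2:ℝ)/n) := Real.rpow_nonneg hP _
    by_cases htP : t * P = 0
    · rw [htP, Real.zero_rpow (by positivity)]
      have h1 : 0 ≤ n * (n-1) * P ^ ((2:ℝ)/n) :=
        mul_nonneg (mul_nonneg (by linarith) (by linarith)) hrpownn
      have h2 : (0:ℝ) ≤ 2 * t * S := by positivity
      push_cast
      nlinarith
    · have htpos : 0 < t := lt_of_le_of_ne ht (fun h0 => htP (by rw [← h0, zero_mul]))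
      have hPpos : 0 < P := lt_of_le_of_ne hP (fun h0 => htP (by rw [← h0, mul_zero]))
      set g : ℝ := P ^ ((1:ℝ)/n) with hgdef
      have hgpos : 0 < g := Real.rpow_pos_of_pos hPpos _
      have hg2 : g^2 = P ^ ((2:ℝ)/n) := by
        rw [hgdef, ← Real.rpow_natCast (P ^ ((1:ℝ)/n)) 2, ← Real.rpow_mul hP]
        congr 1
        push_cast
        ring
      have hSg : n * g ≤ S := amgm_nary s x hx'
      have key : (t*P) ^ ((2:ℝ)/(n+1)) ≤ (n-1)/(n+1) * g^2 + 2/(n+1) * (t*g) := by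
        have h := Real.geom_mean_le_arith_mean2_weighted
          (w₁ := (n-1)/(n+1)) (w₂ := 2/(n+1)) (p₁ := g^2) (p₂ := t*g)
          (div_nonneg (by linarith) (by linarith)) (by positivity) (by positivity) (by positivity)
          (by rw [← add_div, show n-1+2 = n+1 from by ring]; exact div_self (by linarith))
        refine le_trans (le_of_eq ?_) h
        have e0 : (t*P) ^ ((2:ℝ)/(n+1)) = t ^ ((2:ℝ)/(n+1)) * P ^ ((2:ℝ)/(n+1)) :=
          Real.mul_rpow ht hP
        have e1 : (g^2) ^ ((n-1)/(n+1)) = P ^ ((2:ℝ)/n * ((n-1)/(n+1))) := by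
          rw [hg2, ← Real.rpow_mul hP]
        have e2 : (t*g) ^ ((2:ℝ)/(n+1)) = t ^ ((2:ℝ)/(n+1)) * P ^ ((1:ℝ)/n * (2/(n+1))) := by
          rw [Real.mul_rpow ht hgpos.le, hgdef, ← Real.rpow_mul hP]
        rw [e0, e1, e2, mul_left_comm, ← Real.rpow_add hPpos,
          show (2:ℝ)/n*((n-1)/(n+1)) + 1/n*(2/(n+1)) = 2/(n+1) from by field_simp; ring]
      have key' : n * (n+1) * (t*P) ^ ((2:ℝ)/(n+1)) ≤ n * ((n-1) * g^2 + 2 * (t*g)) := by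
        have h1 := mul_le_mul_of_nonneg_left key (mul_nonneg (by linarith) (by linarith) : (0:ℝ) ≤ n * (n+1))
        calc n * (n+1) * (t*P) ^ ((2:ℝ)/(n+1))
            ≤ n * (n+1) * ((n-1)/(n+1) * g^2 + 2/(n+1) * (t*g)) := h1
          _ = n * ((n-1) * g^2 + 2 * (t*g)) := by field_simp
      have h2tS : 2 * t * (n * g) ≤ 2 * t * S :=
        mul_le_mul_of_nonneg_left hSg (by positivity)
      push_cast
      have hg2' : n * (n-1) * P ^ ((2:ℝ)/n) = n * (n-1) * g^2 := by rw [hg2]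
      nlinarith [ihP, key', h2tS]

lemma kober_upper_aux {ι : Type*} : ∀ (m : ℕ) (s : Finset ι) (x : ι → ℝ), s.card = m →
    (∀ i ∈ s, 0 ≤ x i) →
    (∑ i ∈ s, x i)^2 ≤ ((m:ℝ) - 1) * (∑ i ∈ s, (x i)^2)
      + (m:ℝ) * (∏ i ∈ s, x i) ^ ((2:ℝ)/m) := by
  intro m
  induction m with
  | zero =>
    intro s x hcard _
    rw [Finset.card_eq_zero] at hcard
    subst hcard
    simp
  | succ m IH =>
    intro s x hcard hx
    have hsne : s.Nonempty := Finset.card_pos.mp (by omega)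
    obtain ⟨a, haS, hamin⟩ := Finset.exists_min_image s x hsne
    have ht : 0 ≤ x a := hx a haS
    set t := x a with htdef
    set s' := s.erase a with hs'def
    have hcard' : s'.card = m := by rw [hs'def, Finset.card_erase_of_mem haS, hcard]; omega
    have hx' : ∀ i ∈ s', 0 ≤ x i := fun i hi => hx i (Finset.mem_of_mem_erase hi)
    have hmin' : ∀ i ∈ s', t ≤ x i := fun i hi => hamin i (Finset.mem_of_mem_erase hi)
    set S' := ∑ i ∈ s', x i with hS'def
    set Q' := ∑ i ∈ s', (x i)^2 with hQ'def
    set P' := ∏ i ∈ s', x i with hP'def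
    have hP'nn : 0 ≤ P' := Finset.prod_nonneg hx'
    have hsum_split : ∑ i ∈ s, x i = S' + t := (Finset.sum_erase_add s x haS).symm
    have hsq_split : ∑ i ∈ s, (x i)^2 = Q' + t^2 :=
      (Finset.sum_erase_add s (fun i => (x i)^2) haS).symm
    have hprod_split : ∏ i ∈ s, x i = P' * t := (Finset.prod_erase_mul s x haS).symm
    rw [hsum_split, hsq_split, hprod_split]
    rcases Nat.eq_zero_or_pos m with hm0 | hmpos
    · subst hm0
      rw [Finset.card_eq_zero] at hcard'
      rw [hcard'] at hS'def hQ'def hP'def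
      simp only [Finset.sum_empty, Finset.prod_empty] at hS'def hQ'def hP'def
      rw [hS'def, hQ'def, hP'def]
      push_cast
      rw [show (2:ℝ)/1 = ((2:ℕ):ℝ) by norm_num, Real.rpow_natCast]
      nlinarith [sq_nonneg t]
    · have hn1 : (1:ℝ) ≤ (m:ℝ) := by exact_mod_cast hmpos
      set n : ℝ := (m:ℝ) with hndef
      have hnne : n ≠ 0 := by linarith
      have ihP : S'^2 ≤ (n - 1) * Q' + n * P' ^ ((2:ℝ)/n) := IH s' x hcard' hx'
      push_cast
      by_cases htz : t = 0
      · rw [htz, mul_zero, Real.zero_rpow (div_ne_zero two_ne_zero (by linarith))]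
        have hCS : S'^2 ≤ (s'.card : ℝ) * Q' := by
          exact_mod_cast sq_sum_le_card_mul_sum_sq (s := s') (f := x)
        rw [hcard'] at hCS
        nlinarith [hCS]
      · have htpos : 0 < t := lt_of_le_of_ne ht (Ne.symm htz)
        have hxpos : ∀ i ∈ s', 0 < x i := fun i hi => lt_of_lt_of_le htpos (hmin' i hi)
        have hP'pos : 0 < P' := Finset.prod_pos hxpos
        set g : ℝ := P' ^ ((1:ℝ)/n) with hgdef
        have hgpos : 0 < g := Real.rpow_pos_of_pos hP'pos _
        have hgne : g ≠ 0 := ne_of_gt hgpos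
        have hg2 : g^2 = P' ^ ((2:ℝ)/n) := by
          rw [hgdef, ← Real.rpow_natCast (P' ^ ((1:ℝ)/n)) 2, ← Real.rpow_mul hP'nn]
          congr 1
          push_cast
          ring
        have htg : t ≤ g := by
          have h1 : t^m ≤ P' := by
            calc t^m = ∏ _i ∈ s', t := by rw [Finset.prod_const, hcard']
              _ ≤ P' := Finset.prod_le_prod (fun i _ => ht) hmin'
          have h2 : (t^m) ^ ((1:ℝ)/n) ≤ P' ^ ((1:ℝ)/n) :=
            Real.rpow_le_rpow (by positivity) h1 (by positivity)
          calc t = (t^m) ^ ((1:ℝ)/n) := by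
                rw [← Real.rpow_natCast t m, ← Real.rpow_mul ht]
                rw [show (m:ℝ) * ((1:ℝ)/n) = 1 by field_simp; exact hndef.symm]
                exact (Real.rpow_one t).symm
            _ ≤ g := h2
        have hQ : n * g^2 ≤ Q' := by
          have h := amgm_nary s' (fun i => (x i)^2) (fun i _ => sq_nonneg _)
          rw [hcard'] at h
          simp only [← hndef] at h
          have e : (∏ i ∈ s', (x i)^2) ^ ((1:ℝ)/n) = g^2 := by
            rw [Finset.prod_pow, ← hP'def, ← Real.rpow_natCast P' 2, ← Real.rpow_mul hP'nn, hg2]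
            congr 1
            push_cast
            ring
          rw [e] at h
          exact h
        have hsum : 2*t*S' ≤ (t/g)*Q' + n*(t*g) := by
          have h1 : ∀ i ∈ s', 2*t*(x i) ≤ t/g*(x i)^2 + t*g := by
            intro i hi
            have e : t/g*(x i)^2 + t*g - 2*t*(x i) = (t/g) * (x i - g)^2 := by
              field_simp
              ring
            nlinarith [mul_nonneg (div_nonneg ht hgpos.le) (sq_nonneg (x i - g))]
          have h2 := Finset.sum_le_sum h1
          rw [← Finset.mul_sum, ← hS'def] at h2
          calc 2*t*S' ≤ ∑ i ∈ s', (t/g*(x i)^2 + t*g) := h2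
            _ = (t/g)*Q' + n*(t*g) := by
                rw [Finset.sum_add_distrib, ← Finset.mul_sum, ← hQ'def, Finset.sum_const, hcard',
                  nsmul_eq_mul]
        have h2 : n*g^2 - n*(t*g) ≤ Q' - (t/g)*Q' := by
          have hcoef : 0 ≤ 1 - t/g := by
            rw [sub_nonneg, div_le_one hgpos]
            exact htg
          have h3 := mul_le_mul_of_nonneg_left hQ hcoef
          rw [sub_mul, sub_mul, one_mul, one_mul] at h3
          rw [show t/g*(n*g^2) = n*(t*g) from by field_simp] at h3
          linarith
        have key2 : 2*n*(t*g) ≤ (n-1)*t^2 + (n+1)*(P'*t) ^ ((2:ℝ)/(n+1)) := by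
          have hw1 : (0:ℝ) ≤ (n-1)/(2*n) := div_nonneg (by linarith) (by linarith)
          have hw2 : (0:ℝ) ≤ (n+1)/(2*n) := div_nonneg (by linarith) (by linarith)
          have h := Real.geom_mean_le_arith_mean2_weighted
            (w₁ := (n-1)/(2*n)) (w₂ := (n+1)/(2*n)) (p₁ := t^2) (p₂ := (P'*t) ^ ((2:ℝ)/(n+1)))
            hw1 hw2 (sq_nonneg t) (Real.rpow_nonneg (mul_nonneg hP'nn ht) _)
            (by rw [← add_div, show n-1+(n+1) = 2*n from by ring]
                exact div_self (by linarith))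
          have eprod : (t^2) ^ ((n-1)/(2*n)) * ((P'*t) ^ ((2:ℝ)/(n+1))) ^ ((n+1)/(2*n))
              = t * g := by
            rw [← Real.rpow_natCast t 2, ← Real.rpow_mul ht,
              ← Real.rpow_mul (mul_nonneg hP'nn ht),
              show (2:ℝ)/(n+1)*((n+1)/(2*n)) = 1/n from by field_simp,
              Real.mul_rpow hP'nn ht, mul_left_comm, ← Real.rpow_add htpos,
              show ((2:ℕ):ℝ)*((n-1)/(2*n)) + 1/n = 1 from by push_cast; field_simp; ring,
              Real.rpow_one, hgdef, mul_comm]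
          rw [eprod] at h
          have h4 := mul_le_mul_of_nonneg_left h (by linarith : (0:ℝ) ≤ 2*n)
          calc 2*n*(t*g) ≤ 2*n*((n-1)/(2*n)*t^2 + (n+1)/(2*n)*((P'*t) ^ ((2:ℝ)/(n+1)))) := h4
            _ = (n-1)*t^2 + (n+1)*(P'*t) ^ ((2:ℝ)/(n+1)) := by field_simp
        have hg2' : n * P' ^ ((2:ℝ)/n) = n * g^2 := by rw [hg2]
        have expand : (S'+t)^2 = S'^2 + 2*t*S' + t^2 := by ring
        rw [expand]
        linarith [ihP, hsum, h2, key2, hg2']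

lemma kober_upper {ι : Type*} (s : Finset ι) (x : ι → ℝ) (hx : ∀ i ∈ s, 0 ≤ x i) :
    (∑ i ∈ s, x i)^2 ≤ ((s.card:ℝ) - 1) * (∑ i ∈ s, (x i)^2)
      + (s.card:ℝ) * (∏ i ∈ s, x i) ^ ((2:ℝ)/s.card) :=
  kober_upper_aux s.card s x rfl hx

lemma somborEigs_prod {n : ℕ} (G : SimpleGraph (Fin n)) :
    ∏ i, somborEigs G i = (somborMatrix G).det := by
  rw [Matrix.IsHermitian.det_eq_prod_eigenvalues (somborMatrix_isHermitian G)]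
  simp only [somborEigs, RCLike.ofReal_real_eq_id, id_eq]
  congr!

lemma trace_eq_sum_eigs_sq {n : ℕ} (G : SimpleGraph (Fin n)) :
    Matrix.trace (somborMatrix G * somborMatrix G) = ∑ i, (somborEigs G i)^2 := by
  set hS := somborMatrix_isHermitian G with hSdef
  set u := hS.eigenvectorUnitary with hudef
  set V : Matrix (Fin n) (Fin n) ℝ := (u : Matrix (Fin n) (Fin n) ℝ) with hVdef
  set D : Matrix (Fin n) (Fin n) ℝ :=
    Matrix.diagonal (RCLike.ofReal ∘ hS.eigenvalues) with hDdef
  have huV : star V * V = 1 := Matrix.mem_unitaryGroup_iff'.mp u.2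
  have hspec : somborMatrix G = V * D * star V := hS.spectral_theorem
  have e : (V*D*star V) * (V*D*star V) = V*(D*D)*star V := by
    calc (V*D*star V) * (V*D*star V) = V*(D*((star V*V)*(D*star V))) := by
          simp only [Matrix.mul_assoc]
      _ = V*(D*D)*star V := by rw [huV, Matrix.one_mul]; simp only [Matrix.mul_assoc]
  rw [hspec, e, Matrix.trace_mul_cycle, huV, Matrix.one_mul, hDdef,
    Matrix.diagonal_mul_diagonal, Matrix.trace_diagonal]
  apply Finset.sum_congr rfl
  intro i _
  simp only [somborEigs, Function.comp_apply, RCLike.ofReal_real_eq_id, id_eq, Pi.mul_apply, sq]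
  congr!

lemma trace_eq_two_F {n : ℕ} (G : SimpleGraph (Fin n)) :
    Matrix.trace (somborMatrix G * somborMatrix G) = 2 * forgottenIndex G := by
  classical
  have hentry : ∀ i j, somborMatrix G i j * somborMatrix G j i
      = (if G.Adj i j then ((G.degree i:ℝ)^2 + (G.degree j:ℝ)^2) else 0) := by
    intro i j
    by_cases h : G.Adj i j
    · simp only [somborMatrix, h, if_true, h.symm]
      rw [show ((G.degree j:ℝ)^2 + (G.degree i:ℝ)^2) = ((G.degree i:ℝ)^2 + (G.degree j:ℝ)^2)
        from by ring]
      exact Real.mul_self_sqrt (by positivity)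
    · have h' : ¬ G.Adj j i := fun hh => h hh.symm
      simp [somborMatrix, h, h']
  have hdegsum : ∀ (f : Fin n → ℝ) i, (∑ j, if G.Adj i j then f i else 0) = f i * G.degree i := by
    intro f i
    rw [show (fun j => if G.Adj i j then f i else 0) = fun j => f i * (if G.Adj i j then 1 else 0)
      from funext fun j => by split <;> simp]
    rw [← Finset.mul_sum, Finset.sum_boole]
    congr 1
    rw [← SimpleGraph.neighborFinset_eq_filter]
    rfl
  have key : Matrix.trace (somborMatrix G * somborMatrix G)
      = ∑ i, ∑ j, (if G.Adj i j then ((G.degree i:ℝ)^2 + (G.degree j:ℝ)^2) else 0) := by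
    rw [Matrix.trace]
    apply Finset.sum_congr rfl
    intro i _
    rw [Matrix.diag_apply, Matrix.mul_apply]
    exact Finset.sum_congr rfl fun j _ => hentry i j
  rw [key]
  have split : ∀ i j, (if G.Adj i j then ((G.degree i:ℝ)^2 + (G.degree j:ℝ)^2) else 0)
      = (if G.Adj i j then (G.degree i:ℝ)^2 else 0) + (if G.Adj i j then (G.degree j:ℝ)^2 else 0) := by
    intro i j; split <;> simp
  simp_rw [split, Finset.sum_add_distrib]
  have h1 : ∑ i, ∑ j, (if G.Adj i j then (G.degree i:ℝ)^2 else 0) = forgottenIndex G := by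
    rw [forgottenIndex]
    apply Finset.sum_congr rfl
    intro i _
    rw [hdegsum (fun i => (G.degree i:ℝ)^2) i]
    ring
  have h2 : ∑ i, ∑ j, (if G.Adj i j then (G.degree j:ℝ)^2 else 0) = forgottenIndex G := by
    rw [Finset.sum_comm]
    rw [forgottenIndex]
    apply Finset.sum_congr rfl
    intro j _
    have : ∀ i, (if G.Adj i j then ((G.degree j:ℝ)^2) else 0) = (if G.Adj j i then ((G.degree j:ℝ)^2) else 0) := by
      intro i
      congr 1
      simp [G.adj_comm]
    simp_rw [this]
    rw [hdegsum (fun j => (G.degree j:ℝ)^2) j]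
    ring
  rw [h1, h2]
  ring

theorem stmt10 {n : ℕ} (G : SimpleGraph (Fin n)) :
    Real.sqrt (2 * forgottenIndex G +
        n * ((n : ℝ) - 1) * |(somborMatrix G).det| ^ ((2 : ℝ) / n)) ≤ somborEnergy G ∧
    somborEnergy G ≤ Real.sqrt (2 * ((n : ℝ) - 1) * forgottenIndex G +
        n * |(somborMatrix G).det| ^ ((2 : ℝ) / n)) := by
  classical
  set x : Fin n → ℝ := fun i => |somborEigs G i| with hxdef
  have hx : ∀ i ∈ (Finset.univ : Finset (Fin n)), 0 ≤ x i := fun i _ => abs_nonneg _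
  have hE : ∑ i, x i = somborEnergy G := rfl
  have hEnn : 0 ≤ somborEnergy G := by
    rw [← hE]; exact Finset.sum_nonneg hx
  have hsq : ∑ i, (x i)^2 = 2 * forgottenIndex G := by
    rw [← trace_eq_two_F, trace_eq_sum_eigs_sq]
    exact Finset.sum_congr rfl fun i _ => sq_abs _
  have hprod : ∏ i, x i = |(somborMatrix G).det| := by
    rw [← somborEigs_prod, ← Finset.abs_prod]
  have lower := kober_lower (Finset.univ : Finset (Fin n)) x hx
  have upper := kober_upper (Finset.univ : Finset (Fin n)) x hx
  simp only [Finset.card_univ, Fintype.card_fin] at lower upper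
  rw [hsq, hprod, hE] at lower upper
  constructor
  · calc Real.sqrt (2 * forgottenIndex G +
          n * ((n : ℝ) - 1) * |(somborMatrix G).det| ^ ((2 : ℝ) / n))
        ≤ Real.sqrt ((somborEnergy G)^2) := Real.sqrt_le_sqrt (by linarith)
      _ = somborEnergy G := Real.sqrt_sq hEnn
  · calc somborEnergy G = Real.sqrt ((somborEnergy G)^2) := (Real.sqrt_sq hEnn).symm
      _ ≤ Real.sqrt (2 * ((n : ℝ) - 1) * forgottenIndex G +
          n * |(somborMatrix G).det| ^ ((2 : ℝ) / n)) := Real.sqrt_le_sqrt (by linarith)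
end
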